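/- arXiv:2206.08993 — 5 statements merged into one kernel-verified Lean document; each statement's English description precedes it below -/
import Mathlib

section
/- For weak compositions α and γ of length n, γ ⪯ α in the left swap order if and only if γ ≤ α in the Bruhat order. -/
/-- The `j`-th largest element (0-indexed) of a finite set of `Fin n`,
viewed as an element of `[n] = {1,...,n}` via `i ↦ i + 1`; `0` as default. -/
def jthLargestF (n : ℕ) (S : Finset (Fin n)) (j : ℕ) : ℕ :=
  (((Finset.sort S (· ≤ ·)).reverse).map (fun i => (i : ℕ) + 1)).getD j 0

/-- The `j`-th smallest element (0-indexed), similarly. -/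
def jthSmallestF (n : ℕ) (S : Finset (Fin n)) (j : ℕ) : ℕ :=
  ((Finset.sort S (· ≤ ·)).map (fun i => (i : ℕ) + 1)).getD j 0

/-- Order on subsets of `[n]`: equal cardinality and `j`-th largest elements compare. -/
def setLEF (n : ℕ) (S T : Finset (Fin n)) : Prop :=
  S.card = T.card ∧ ∀ j < S.card, jthLargestF n S j ≤ jthLargestF n T j

/-- The `c`-th column of the key tableau of the weak composition `α`: `{i : α i ≥ c}`. -/
def col (n : ℕ) (α : Fin n → ℕ) (c : ℕ) : Finset (Fin n) :=
  Finset.univ.filter (fun i => c ≤ α i)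

/-- The support of a weak composition. -/
def suppC (n : ℕ) (α : Fin n → ℕ) : Finset (Fin n) :=
  Finset.univ.filter (fun i => 0 < α i)

/-- Bruhat order on weak compositions: key tableaux have the same shape and
compare entry-wise, expressed column by column. -/
def bruhatLE (n : ℕ) (γ α : Fin n → ℕ) : Prop :=
  ∀ c : ℕ, 1 ≤ c → setLEF n (col n γ c) (col n α c)

/-- `μ` is the Bruhat-minimum of `{γ : γ ≥ α, supp γ ⊆ S}`. -/
def isBruhatMin (n : ℕ) (α : Fin n → ℕ) (S : Finset (Fin n)) (μ : Fin n → ℕ) : Prop :=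
  bruhatLE n α μ ∧ suppC n μ ⊆ S ∧
    ∀ γ : Fin n → ℕ, bruhatLE n α γ → suppC n γ ⊆ S → bruhatLE n μ γ

/-- `μ` is the Bruhat-maximum of `{γ : γ ≤ α, supp γ ⊆ S}`. -/
def isBruhatMax (n : ℕ) (α : Fin n → ℕ) (S : Finset (Fin n)) (μ : Fin n → ℕ) : Prop :=
  bruhatLE n μ α ∧ suppC n μ ⊆ S ∧
    ∀ γ : Fin n → ℕ, bruhatLE n γ α → suppC n γ ⊆ S → bruhatLE n γ μ

/-- `γ` is obtained from `α` by a single left swap: exchange parts `α i < α j` with `i < j`. -/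
def leftSwapStep (n : ℕ) (γ α : Fin n → ℕ) : Prop :=
  ∃ i j : Fin n, i < j ∧ α i < α j ∧ γ = fun k => α (Equiv.swap i j k)

/-- The left swap order: reflexive-transitive closure of single left swaps. -/
def leftSwapLE (n : ℕ) (γ α : Fin n → ℕ) : Prop :=
  Relation.ReflTransGen (leftSwapStep n) γ α

/-- `B = C ◁ A`: there is a strictly increasing choice `b` of elements of `C`,
`b k` being the smallest element of `C` that is `≥` the `k`-th smallest element
of `A` and exceeds all previously chosen elements, with `B` the set of chosen elements. -/
def isLhd (n : ℕ) (C A B : Finset (Fin n)) : Prop :=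
  ∃ b : Fin A.card → Fin n, StrictMono b ∧ (∀ k, b k ∈ C) ∧
    (∀ k : Fin A.card, jthSmallestF n A k ≤ (b k : ℕ) + 1) ∧
    (∀ k : Fin A.card, ∀ c ∈ C, jthSmallestF n A k ≤ (c : ℕ) + 1 →
      (∀ j : Fin A.card, j < k → b j < c) → b k ≤ c) ∧
    B = Finset.image b Finset.univ

/-- `lhdChain [C₁, ..., C_k] B` means `B = C₁ ◁ (C₂ ◁ (⋯ ◁ C_k))`. -/
def lhdChain (n : ℕ) : List (Finset (Fin n)) → Finset (Fin n) → Prop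
  | [], B => B = ∅
  | [C], B => B = C
  | C :: D :: rest, B => ∃ B', lhdChain n (D :: rest) B' ∧ isLhd n C B' B

/-- `T ∈ RSSYT(α)`: a reverse semistandard Young tableau of shape `α⁺`, encoded by its
columns (strictly decreasing sets, rows weakly decreasing), whose left key is
entry-wise at most `key α`. -/
def memRSSYT (n : ℕ) (α : Fin n → ℕ) (T : ℕ → Finset (Fin n)) : Prop :=
  (∀ c, 1 ≤ c → (T c).card = (col n α c).card) ∧
  (∀ c, 1 ≤ c → ∀ k < (T (c+1)).card, jthLargestF n (T (c+1)) k ≤ jthLargestF n (T c) k) ∧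
  (∀ c, 1 ≤ c → ∃ B, lhdChain n ((List.range c).map (fun i => T (i+1))) B ∧
    setLEF n B (col n α c))

/-- `(L, E) ∈ RSVT(α)`: a reverse set-valued tableau of shape `α⁺` encoded as a diagram
pair by columns: `L c` the leading entries and `E c` the extra entries of column `c`,
with left key (of the leading tableau) entry-wise at most `key α`. -/
def memRSVT (n : ℕ) (α : Fin n → ℕ) (L E : ℕ → Finset (Fin n)) : Prop :=
  (∀ c, 1 ≤ c → Disjoint (L c) (E c)) ∧
  (∀ c, 1 ≤ c → (L c).card = (col n α c).card) ∧
  (∀ c, 1 ≤ c → ∀ k < (L (c+1)).card, jthLargestF n (L (c+1)) k ≤ jthLargestF n (L c) k) ∧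
  (∀ c, 1 ≤ c → ∀ e ∈ E c,
    ((L (c+1)).filter (fun l => e < l)).card < ((L c).filter (fun l => e < l)).card) ∧
  (∀ c, 1 ≤ c → ∃ B, lhdChain n ((List.range c).map (fun i => L (i+1))) B ∧
    setLEF n B (col n α c))

/-- `(L, E)` is a valid reverse set-valued tableau (of some shape), without any
left-key condition. -/
def isValidRSVT (n : ℕ) (L E : ℕ → Finset (Fin n)) : Prop :=
  (∀ c, 1 ≤ c → Disjoint (L c) (E c)) ∧
  (∀ c, 1 ≤ c → (L (c+1)).card ≤ (L c).card) ∧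
  (∃ N, ∀ c, N ≤ c → L c = ∅ ∧ E c = ∅) ∧
  (∀ c, 1 ≤ c → ∀ k < (L (c+1)).card, jthLargestF n (L (c+1)) k ≤ jthLargestF n (L c) k) ∧
  (∀ c, 1 ≤ c → ∀ e ∈ E c,
    ((L (c+1)).filter (fun l => e < l)).card < ((L c).filter (fun l => e < l)).card)

/-- `j`-th largest element of a finite set of naturals (0-indexed), default `0`. -/
def jthLargestN (S : Finset ℕ) (j : ℕ) : ℕ :=
  ((Finset.sort S (· ≤ ·)).reverse).getD j 0

/-- `j`-th smallest element of a finite set of naturals (0-indexed), default `0`. -/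
def jthSmallestN (S : Finset ℕ) (j : ℕ) : ℕ :=
  (Finset.sort S (· ≤ ·)).getD j 0


/-- key list lemma -/
lemma sortedL {l : List ℕ} (hl : l.Pairwise (· ≥ ·)) :
    ∀ j y, j < l.length → (l.getD j 0 ≤ y ↔ l.countP (fun x => decide (y < x)) ≤ j) := by
  induction l with
  | nil => intro j y h; simp at h
  | cons a t ih =>
    intro j y hj
    have ht : t.Pairwise (· ≥ ·) := hl.of_cons
    have hall : ∀ x ∈ t, x ≤ a := fun x hx => List.rel_of_pairwise_cons hl hx
    cases j with
    | zero =>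
      simp only [List.getD_cons_zero, List.countP_cons, Nat.le_zero]
      constructor
      · intro hay
        have h1 : t.countP (fun x => decide (y < x)) = 0 := by
          rw [List.countP_eq_zero]
          intro x hx
          simpa using le_trans (hall x hx) hay
        simp [h1, Nat.not_lt.2 hay]
      · intro h
        by_contra hya
        simp [Nat.lt_of_not_le hya] at h
    | succ j =>
      simp only [List.getD_cons_succ, List.countP_cons]
      by_cases hya : y < a
      · have hd : (decide (y < a)) = true := by simpa using hya
        rw [hd, ih ht j y (by simpa using hj)]
        simp only [if_true]
        omega
      · have hay : a ≤ y := Nat.le_of_not_lt hya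
        have h1 : t.countP (fun x => decide (y < x)) = 0 := by
          rw [List.countP_eq_zero]
          intro x hx
          simpa using le_trans (hall x hx) hay
        have h2 : t.getD j 0 ≤ y := by
          have hjt : j < t.length := by simpa using hj
          rw [List.getD_eq_getElem _ _ hjt]
          exact le_trans (hall _ (List.getElem_mem hjt)) hay
        have hf : (decide (y < a)) = false := by simpa using hya
        exact iff_of_true h2 (by simp [h1, hf])

lemma countP_toList {n : ℕ} (s : Finset (Fin n)) (p : Fin n → Prop) [DecidablePred p] :
    s.toList.countP (fun x => decide (p x)) = (s.filter p).card := by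
  have h := Multiset.coe_countP p s.toList
  rw [Finset.coe_toList] at h
  rw [← h]
  show Multiset.countP p s.val = (Finset.filter p s).card
  rw [Multiset.countP_eq_card_filter]
  rfl

lemma jthLargestF_eq (n : ℕ) (S : Finset (Fin n)) (j : ℕ) :
    jthLargestF n S j = (((Finset.sort S (· ≤ ·)).reverse).map (fun i : Fin n => (i : ℕ) + 1)).getD j 0 := by
  have h1 : ((Finset.sort S (· ≤ ·)).reverse.flatMap (fun a : Fin n => [((a:ℕ) : ℕ)])) =
      (Finset.sort S (· ≤ ·)).reverse.map (fun a : Fin n => (a : ℕ)) := by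
    induction (Finset.sort S (· ≤ ·)).reverse with
    | nil => rfl
    | cons a t ih => simp [List.flatMap_cons, ih]
  simp only [jthLargestF]
  rw [show (do let a ← (Finset.sort S (· ≤ ·)).reverse; pure ((a : Fin n) : ℕ)) =
    (Finset.sort S (· ≤ ·)).reverse.flatMap (fun a : Fin n => [(a:ℕ)]) from rfl, h1, List.map_map]
  rfl

lemma jthLargest_le_iff (n : ℕ) (S : Finset (Fin n)) {j : ℕ} (hj : j < S.card) (y : ℕ) :
    (jthLargestF n S j ≤ y ↔ (S.filter (fun x : Fin n => y < (x : ℕ) + 1)).card ≤ j) := by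
  have hsorted : (((Finset.sort S (· ≤ ·)).reverse).map (fun i : Fin n => (i : ℕ) + 1)).Pairwise (· ≥ ·) := by
    rw [List.pairwise_map, List.pairwise_reverse]
    exact (Finset.pairwise_sort S (· ≤ ·)).imp (by intro a b h; simp only [ge_iff_le]; omega)
  have hlen : (((Finset.sort S (· ≤ ·)).reverse).map (fun i : Fin n => (i : ℕ) + 1)).length = S.card := by
    simp [Finset.length_sort]
  have hcount : (((Finset.sort S (· ≤ ·)).reverse).map (fun i : Fin n => (i : ℕ) + 1)).countP
      (fun x => decide (y < x)) = (S.filter (fun x : Fin n => y < (x : ℕ) + 1)).card := by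
    rw [List.countP_map, List.countP_reverse]
    rw [(Finset.sort_perm_toList S (· ≤ ·)).countP_eq]
    exact countP_toList S (fun x : Fin n => y < (x : ℕ) + 1)
  rw [jthLargestF_eq, sortedL hsorted j y (by rw [hlen]; exact hj), hcount]

lemma setLEF_iff_count (n : ℕ) (S T : Finset (Fin n)) :
    setLEF n S T ↔ (S.card = T.card ∧ ∀ y : ℕ,
      (S.filter (fun x : Fin n => y < (x : ℕ) + 1)).card ≤ (T.filter (fun x : Fin n => y < (x : ℕ) + 1)).card) := by
  constructor
  · rintro ⟨hc, h⟩
    refine ⟨hc, fun y => ?_⟩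
    set k := (T.filter (fun x : Fin n => y < (x : ℕ) + 1)).card with hk
    by_cases hks : k < S.card
    · have h1 : jthLargestF n T k ≤ y := by
        rw [jthLargest_le_iff n T (by omega) y]
      have h2 : jthLargestF n S k ≤ y := le_trans (h k hks) h1
      rw [jthLargest_le_iff n S hks y] at h2
      exact h2
    · calc (S.filter (fun x : Fin n => y < (x : ℕ) + 1)).card ≤ S.card := Finset.card_filter_le _ _
        _ ≤ k := by omega
  · rintro ⟨hc, h⟩
    refine ⟨hc, fun j hj => ?_⟩
    have h1 : (T.filter (fun x : Fin n => (jthLargestF n T j) < (x : ℕ) + 1)).card ≤ j := by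
      rw [← jthLargest_le_iff n T (by omega) _]
    have h2 := le_trans (h (jthLargestF n T j)) h1
    rw [← jthLargest_le_iff n S hj _] at h2
    exact h2

def Pset (n : ℕ) (β : Fin n → ℕ) (c y : ℕ) : Finset (Fin n) :=
  Finset.univ.filter (fun k => (k : ℕ) < y ∧ c ≤ β k)

def pc (n : ℕ) (β : Fin n → ℕ) (c y : ℕ) : ℕ := (Pset n β c y).card

lemma mem_Pset {n : ℕ} {β : Fin n → ℕ} {c y : ℕ} {k : Fin n} :
    k ∈ Pset n β c y ↔ (k : ℕ) < y ∧ c ≤ β k := by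
  simp [Pset]

lemma pc_add_compl (n : ℕ) (β : Fin n → ℕ) (c y : ℕ) :
    pc n β c y + ((col n β c).filter (fun x : Fin n => y < (x : ℕ) + 1)).card
      = (col n β c).card := by
  have h1 : (col n β c).filter (fun x : Fin n => y < (x : ℕ) + 1)
      = (col n β c).filter (fun x : Fin n => ¬ ((x : ℕ) < y)) := by
    apply Finset.filter_congr; intro x _; constructor <;> intro h <;> simp at * <;> omega
  have h2 : Pset n β c y = (col n β c).filter (fun x : Fin n => (x : ℕ) < y) := by
    ext k; simp [Pset, col]; tauto
  rw [pc, h1, h2]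
  exact Finset.card_filter_add_card_filter_not _

lemma pc_top (n : ℕ) (β : Fin n → ℕ) (c : ℕ) : pc n β c n = (col n β c).card := by
  unfold pc
  congr 1
  ext k
  simp [Pset, col, k.isLt]

lemma bruhatLE_pc (n : ℕ) (γ α : Fin n → ℕ) :
    bruhatLE n γ α ↔ ∀ c, 1 ≤ c → (pc n γ c n = pc n α c n ∧ ∀ y, pc n α c y ≤ pc n γ c y) := by
  unfold bruhatLE
  apply forall_congr'; intro c
  apply imp_congr_right; intro _
  rw [setLEF_iff_count]
  constructor
  · rintro ⟨hc, h⟩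
    constructor
    · rw [pc_top, pc_top, hc]
    · intro y
      have g1 := pc_add_compl n γ c y
      have g2 := pc_add_compl n α c y
      have := h y
      omega
  · rintro ⟨hc, h⟩
    rw [pc_top, pc_top] at hc
    refine ⟨hc, fun y => ?_⟩
    have g1 := pc_add_compl n γ c y
    have g2 := pc_add_compl n α c y
    have := h y
    omega

lemma Pset_mono (n : ℕ) (β : Fin n → ℕ) (c : ℕ) {y y' : ℕ} (h : y ≤ y') :
    Pset n β c y ⊆ Pset n β c y' := by
  intro k hk; rw [mem_Pset] at *; omega

def Qset (n : ℕ) (β : Fin n → ℕ) (c a b : ℕ) : Finset (Fin n) :=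
  Finset.univ.filter (fun k => a ≤ (k : ℕ) ∧ (k : ℕ) < b ∧ c ≤ β k)

lemma mem_Qset {n : ℕ} {β : Fin n → ℕ} {c a b : ℕ} {k : Fin n} :
    k ∈ Qset n β c a b ↔ a ≤ (k : ℕ) ∧ (k : ℕ) < b ∧ c ≤ β k := by simp [Qset]

lemma pc_add_Q (n : ℕ) (β : Fin n → ℕ) (c : ℕ) {a b : ℕ} (hab : a ≤ b) :
    pc n β c a + (Qset n β c a b).card = pc n β c b := by
  unfold pc
  rw [← Finset.card_union_of_disjoint (by
    rw [Finset.disjoint_left]; intro k hk1 hk2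
    rw [mem_Pset] at hk1; rw [mem_Qset] at hk2; omega)]
  congr 1
  ext k
  simp only [Finset.mem_union, mem_Pset, mem_Qset]
  omega

lemma pc_succ (n : ℕ) (β : Fin n → ℕ) (c y : ℕ) (hy : y < n) :
    pc n β c (y + 1) = pc n β c y + (if c ≤ β ⟨y, hy⟩ then 1 else 0) := by
  rw [← pc_add_Q n β c (Nat.le_succ y)]
  congr 1
  by_cases h : c ≤ β ⟨y, hy⟩
  · rw [if_pos h]
    rw [show Qset n β c y (y+1) = {⟨y, hy⟩} from ?_]
    · simp
    · ext k; simp only [mem_Qset, Finset.mem_singleton]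
      constructor
      · rintro ⟨h1, h2, h3⟩; exact Fin.ext (by simp only [Fin.val_mk]; omega)
      · rintro rfl; exact ⟨le_refl _, by simp only [Fin.val_mk]; omega, h⟩
  · rw [if_neg h]
    rw [show Qset n β c y (y+1) = ∅ from ?_]
    · simp
    · ext k; simp only [mem_Qset, Finset.notMem_empty, iff_false]
      rintro ⟨h1, h2, h3⟩
      have : k = ⟨y, hy⟩ := Fin.ext (by simp only [Fin.val_mk]; omega)
      exact h (this ▸ h3)

section Swap
variable {n : ℕ} {β : Fin n → ℕ} {i j : Fin n}

lemma Pset_swap_low (hij : i < j) {c y : ℕ} (hy : y ≤ (i : ℕ)) :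
    Pset n (fun m => β (Equiv.swap i j m)) c y = Pset n β c y := by
  ext k
  rw [mem_Pset, mem_Pset]
  constructor <;> rintro ⟨h1, h2⟩ <;> refine ⟨h1, ?_⟩ <;>
  · have hki : k ≠ i := by intro h; subst h; omega
    have hkj : k ≠ j := by intro h; subst h; have := hij; omega
    rwa [Equiv.swap_apply_of_ne_of_ne hki hkj] at *

lemma pc_swap_high (hij : i < j) {c y : ℕ} (hy : (j : ℕ) < y) :
    pc n (fun m => β (Equiv.swap i j m)) c y = pc n β c y := by
  have himg : Pset n (fun m => β (Equiv.swap i j m)) c y = (Pset n β c y).image (Equiv.swap i j) := by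
    ext k
    rw [Finset.mem_image]
    have hky : ∀ m : Fin n, ((m : ℕ) < y ↔ ((Equiv.swap i j m : Fin n) : ℕ) < y) := by
      intro m
      rcases eq_or_ne m i with rfl | hmi
      · rw [Equiv.swap_apply_left]; have := hij; constructor <;> intro <;> omega
      rcases eq_or_ne m j with rfl | hmj
      · rw [Equiv.swap_apply_right]; have := hij; constructor <;> intro <;> omega
      · rw [Equiv.swap_apply_of_ne_of_ne hmi hmj]
    constructor
    · intro hk
      rw [mem_Pset] at hk
      refine ⟨Equiv.swap i j k, ?_, Equiv.swap_apply_self i j k⟩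
      rw [mem_Pset]
      exact ⟨by rw [← hky k]; exact hk.1, hk.2⟩
    · rintro ⟨m, hm, rfl⟩
      rw [mem_Pset] at *
      refine ⟨by rw [← hky m]; exact hm.1, ?_⟩
      rw [Equiv.swap_apply_self]
      exact hm.2
  rw [pc, himg, Finset.card_image_of_injective _ (Equiv.injective _), pc]

lemma mem_Pset_swap_mid (hij : i < j) {c y : ℕ} (h2 : y ≤ (j : ℕ)) (k : Fin n) :
    (k ∈ Pset n (fun m => β (Equiv.swap i j m)) c y ↔
      (if k = i then ((k : ℕ) < y ∧ c ≤ β j) else ((k : ℕ) < y ∧ c ≤ β k))) := by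
  by_cases hk : k = i
  · subst hk; rw [if_pos rfl, mem_Pset, Equiv.swap_apply_left]
  · rw [if_neg hk, mem_Pset]
    refine and_congr_right (fun hky => ?_)
    have hkj : k ≠ j := by intro h; subst h; omega
    rw [Equiv.swap_apply_of_ne_of_ne hk hkj]

lemma pc_swap_mid_lo (hij : i < j) {c y : ℕ} (h1 : (i : ℕ) < y) (h2 : y ≤ (j : ℕ))
    (hcj : c ≤ β j) (hci : c ≤ β i) :
    pc n (fun m => β (Equiv.swap i j m)) c y = pc n β c y := by
  unfold pc; congr 1
  ext k
  rw [mem_Pset_swap_mid hij h2, mem_Pset]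
  by_cases hk : k = i
  · subst hk; simp [h1, hci, hcj]
  · rw [if_neg hk]

lemma pc_swap_mid_add (hij : i < j) {c y : ℕ} (h1 : (i : ℕ) < y) (h2 : y ≤ (j : ℕ))
    (hcj : c ≤ β j) (hci : ¬ c ≤ β i) :
    pc n (fun m => β (Equiv.swap i j m)) c y = pc n β c y + 1 := by
  have hset : Pset n (fun m => β (Equiv.swap i j m)) c y = insert i (Pset n β c y) := by
    ext k
    rw [mem_Pset_swap_mid hij h2, Finset.mem_insert, mem_Pset]
    by_cases hk : k = i
    · subst hk; simp [h1, hcj]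
    · simp [hk]
  rw [pc, hset, Finset.card_insert_of_notMem (by rw [mem_Pset]; tauto), pc]

lemma pc_swap_mid_sub (hij : i < j) {c y : ℕ} (h1 : (i : ℕ) < y) (h2 : y ≤ (j : ℕ))
    (hcj : ¬ c ≤ β j) (hci : c ≤ β i) :
    pc n (fun m => β (Equiv.swap i j m)) c y + 1 = pc n β c y := by
  have hset : Pset n (fun m => β (Equiv.swap i j m)) c y = (Pset n β c y).erase i := by
    ext k
    rw [mem_Pset_swap_mid hij h2, Finset.mem_erase, mem_Pset]
    by_cases hk : k = i
    · subst hk; simp [hcj]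
    · simp [hk]
  have hmem : i ∈ Pset n β c y := by rw [mem_Pset]; exact ⟨h1, hci⟩
  rw [pc, hset, Finset.card_erase_of_mem hmem, pc]
  have : 1 ≤ (Pset n β c y).card := Finset.card_pos.2 ⟨i, hmem⟩
  omega

lemma pc_swap_mid_none (hij : i < j) {c y : ℕ} (h1 : (i : ℕ) < y) (h2 : y ≤ (j : ℕ))
    (hcj : ¬ c ≤ β j) (hci : ¬ c ≤ β i) :
    pc n (fun m => β (Equiv.swap i j m)) c y = pc n β c y := by
  unfold pc; congr 1
  ext k
  rw [mem_Pset_swap_mid hij h2, mem_Pset]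
  by_cases hk : k = i
  · subst hk; simp [hci, hcj]
  · rw [if_neg hk]

end Swap

lemma bruhatLE_refl (n : ℕ) (β : Fin n → ℕ) : bruhatLE n β β :=
  fun _ _ => ⟨rfl, fun _ _ => le_refl _⟩

lemma bruhatLE_trans {n : ℕ} {a b c : Fin n → ℕ}
    (h1 : bruhatLE n a b) (h2 : bruhatLE n b c) : bruhatLE n a c := by
  intro d hd
  obtain ⟨e1, f1⟩ := h1 d hd
  obtain ⟨e2, f2⟩ := h2 d hd
  exact ⟨e1.trans e2, fun j hj => (f1 j hj).trans (f2 j (e1 ▸ hj))⟩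

lemma leftSwapStep_bruhat {n : ℕ} {γ α : Fin n → ℕ} (h : leftSwapStep n γ α) :
    bruhatLE n γ α := by
  obtain ⟨i, j, hij, hval, rfl⟩ := h
  rw [bruhatLE_pc]
  intro c hc
  constructor
  · exact pc_swap_high hij j.isLt
  · intro y
    rcases le_or_gt y (i : ℕ) with hy | hy
    · unfold pc; rw [Pset_swap_low hij hy]
    · rcases le_or_gt y (j : ℕ) with hy2 | hy2
      · by_cases hcj : c ≤ α j
        · by_cases hci : c ≤ α i
          · rw [pc_swap_mid_lo hij hy hy2 hcj hci]
          · rw [pc_swap_mid_add hij hy hy2 hcj hci]; omega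
        · have hci : ¬ c ≤ α i := fun h => hcj (h.trans (le_of_lt hval))
          rw [pc_swap_mid_none hij hy hy2 hcj hci]
      · rw [pc_swap_high hij hy2]

def mu (n : ℕ) (β : Fin n → ℕ) : ℕ := ∑ k : Fin n, (n - (k : ℕ)) * β k

lemma leftSwapStep_mu {n : ℕ} {γ x : Fin n → ℕ} (h : leftSwapStep n γ x) :
    mu n x < mu n γ := by
  obtain ⟨i, j, hij, hval, rfl⟩ := h
  have hne : i ≠ j := ne_of_lt hij
  have hne' : j ≠ i := hne.symm
  set w : Fin n → ℕ := fun k => n - (k : ℕ) with hw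
  have hmu : mu n (fun k => x (Equiv.swap i j k)) = ∑ m : Fin n, w (Equiv.swap i j m) * x m := by
    rw [mu, ← Equiv.sum_comp (Equiv.swap i j) (fun m => w (Equiv.swap i j m) * x m)]
    apply Finset.sum_congr rfl
    intro k _
    rw [Equiv.swap_apply_self]
  rw [hmu, mu]
  have hsplit : ∀ g : Fin n → ℕ, ∑ m : Fin n, g m
      = g i + (g j + ∑ m ∈ (Finset.univ.erase i).erase j, g m) := by
    intro g
    rw [Finset.add_sum_erase _ g (Finset.mem_erase.2 ⟨hne', Finset.mem_univ j⟩),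
      Finset.add_sum_erase _ g (Finset.mem_univ i)]
  rw [hsplit (fun m => w (Equiv.swap i j m) * x m), hsplit (fun m => w m * x m)]
  have hrest : ∑ m ∈ (Finset.univ.erase i).erase j, w (Equiv.swap i j m) * x m
      = ∑ m ∈ (Finset.univ.erase i).erase j, w m * x m := by
    apply Finset.sum_congr rfl
    intro m hm
    rw [Finset.mem_erase, Finset.mem_erase] at hm
    rw [Equiv.swap_apply_of_ne_of_ne hm.2.1 hm.1]
  rw [hrest]
  simp only [Equiv.swap_apply_left, Equiv.swap_apply_right]
  have hwlt : w j < w i := by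
    have := j.isLt
    have hlt : (i : ℕ) < (j : ℕ) := hij
    simp only [hw]
    omega
  have := mul_add_mul_lt_mul_add_mul hwlt hval
  omega

lemma exists_step {n : ℕ} {γ α : Fin n → ℕ} (hb' : bruhatLE n γ α) (hne : γ ≠ α) :
    ∃ x : Fin n → ℕ, leftSwapStep n γ x ∧ bruhatLE n x α := by
  have hb := (bruhatLE_pc n γ α).1 hb'
  -- minimal differing index i
  have hDne : (Finset.univ.filter (fun k : Fin n => γ k ≠ α k)).Nonempty := by
    by_contra h
    apply hne; funext k
    by_contra hk
    exact h ⟨k, Finset.mem_filter.2 ⟨Finset.mem_univ k, hk⟩⟩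
  set Dset := Finset.univ.filter (fun k : Fin n => γ k ≠ α k) with hDset
  set i := Dset.min' hDne with hidef
  have hi_mem : γ i ≠ α i := (Finset.mem_filter.1 (Dset.min'_mem hDne)).2
  have hi_min : ∀ k : Fin n, (k : ℕ) < (i : ℕ) → γ k = α k := by
    intro k hk
    by_contra hk2
    have : i ≤ k := Dset.min'_le k (Finset.mem_filter.2 ⟨Finset.mem_univ k, hk2⟩)
    have : (i : ℕ) ≤ (k : ℕ) := this
    omega
  -- prefix equality
  have hpre : ∀ c y, y ≤ (i : ℕ) → Pset n γ c y = Pset n α c y := by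
    intro c y hy
    ext k
    rw [mem_Pset, mem_Pset]
    constructor <;> rintro ⟨h1, h2⟩ <;> refine ⟨h1, ?_⟩
    · rwa [← hi_min k (by omega)]
    · rwa [hi_min k (by omega)]
  have hpre' : ∀ c y, y ≤ (i : ℕ) → pc n γ c y = pc n α c y := by
    intro c y hy; unfold pc; rw [hpre c y hy]
  -- α i < γ i
  have hαγ : α i < γ i := by
    rcases lt_trichotomy (α i) (γ i) with h | h | h
    · exact h
    · exact absurd h.symm hi_mem
    · exfalso
      have hc1 : 1 ≤ α i := by omega
      have h2 := (hb (α i) hc1).2 ((i : ℕ) + 1)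
      rw [pc_succ n γ (α i) (i : ℕ) i.isLt, pc_succ n α (α i) (i : ℕ) i.isLt] at h2
      simp only [Fin.eta] at h2
      rw [hpre' (α i) (i : ℕ) le_rfl] at h2
      have hg : ¬ (α i ≤ γ i) := by omega
      rw [if_neg hg, if_pos le_rfl] at h2
      omega
  set w := γ i with hwdef
  have hw1 : 1 ≤ w := by omega
  -- strict gap at i+1 for column w
  have hdi : pc n γ w ((i : ℕ) + 1) = pc n α w ((i : ℕ) + 1) + 1 := by
    rw [pc_succ n γ w (i : ℕ) i.isLt, pc_succ n α w (i : ℕ) i.isLt]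
    simp only [Fin.eta]
    rw [hpre' w (i : ℕ) le_rfl]
    rw [if_pos le_rfl, if_neg (by omega)]
  -- first prefix where column-w counts agree again
  have hT1ne : ((Finset.range (n + 1)).filter
      (fun y => (i : ℕ) < y ∧ pc n γ w y = pc n α w y)).Nonempty := by
    refine ⟨n, Finset.mem_filter.2 ⟨Finset.mem_range.2 (by omega), i.isLt, ?_⟩⟩
    rw [pc_top, pc_top]
    have := (hb w hw1).1
    rw [pc_top, pc_top] at this
    exact this
  set T1set := (Finset.range (n + 1)).filter
      (fun y => (i : ℕ) < y ∧ pc n γ w y = pc n α w y) with hT1def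
  set t1 := T1set.min' hT1ne with ht1def
  have ht1mem := Finset.mem_filter.1 (T1set.min'_mem hT1ne)
  have ht1n : t1 ≤ n := by have := Finset.mem_range.1 ht1mem.1; omega
  have ht1i : (i : ℕ) < t1 := ht1mem.2.1
  have ht1pc : pc n γ w t1 = pc n α w t1 := ht1mem.2.2
  have ht1min : ∀ y, (i : ℕ) < y → y < t1 → pc n γ w y ≠ pc n α w y := by
    intro y h1 h2 heq
    have hy : y ∈ T1set := Finset.mem_filter.2 ⟨Finset.mem_range.2 (by omega), h1, heq⟩
    have := T1set.min'_le y hy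
    omega
  have hlt : ∀ y, (i : ℕ) < y → y < t1 → pc n α w y + 1 ≤ pc n γ w y := by
    intro y h1 h2
    have := (hb w hw1).2 y
    have := ht1min y h1 h2
    omega
  have hit1 : (i : ℕ) + 1 < t1 := by
    rcases Nat.lt_or_ge ((i : ℕ) + 1) t1 with h | h
    · exact h
    · exfalso
      have : t1 = (i : ℕ) + 1 := by omega
      rw [this] at ht1pc
      omega
  have hp : t1 - 1 < n := by omega
  -- position t1-1 is a candidate
  have hcand_p : γ ⟨t1 - 1, hp⟩ < w := by
    have e1 := pc_succ n γ w (t1 - 1) hp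
    have e2 := pc_succ n α w (t1 - 1) hp
    have e3 : t1 - 1 + 1 = t1 := by omega
    rw [e3] at e1 e2
    have e4 := hlt (t1 - 1) (by omega) (by omega)
    by_contra hcon
    rw [if_pos (by omega)] at e1
    by_cases h5 : w ≤ α ⟨t1 - 1, hp⟩
    · rw [if_pos h5] at e2; omega
    · rw [if_neg h5] at e2; omega
  set Cand := Finset.univ.filter
      (fun t : Fin n => (i : ℕ) < (t : ℕ) ∧ (t : ℕ) < t1 ∧ γ t < w) with hCdef
  have hCne : Cand.Nonempty := by
    refine ⟨⟨t1 - 1, hp⟩, Finset.mem_filter.2 ⟨Finset.mem_univ _, ?_, ?_, hcand_p⟩⟩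
    · simp only [Fin.val_mk]; omega
    · simp only [Fin.val_mk]; omega
  set v := (Cand.image γ).max' (hCne.image γ) with hvdef
  have hJne : (Cand.filter (fun t => γ t = v)).Nonempty := by
    obtain ⟨t, ht, hv⟩ := Finset.mem_image.1 ((Cand.image γ).max'_mem (hCne.image γ))
    exact ⟨t, Finset.mem_filter.2 ⟨ht, hv⟩⟩
  set j := (Cand.filter (fun t => γ t = v)).min' hJne with hjdef
  have hj_mem := Finset.mem_filter.1 ((Cand.filter (fun t => γ t = v)).min'_mem hJne)
  have hjv : γ j = v := hj_mem.2
  have hjC := Finset.mem_filter.1 hj_mem.1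
  have hij : (i : ℕ) < (j : ℕ) := hjC.2.1
  have hjt1 : (j : ℕ) < t1 := hjC.2.2.1
  have hvw : v < w := hjv ▸ hjC.2.2.2
  have hvmax : ∀ t, t ∈ Cand → γ t ≤ v := by
    intro t ht
    exact (Cand.image γ).le_max' (γ t) (Finset.mem_image_of_mem γ ht)
  -- key claim
  have hkey : ∀ c, v < c → c ≤ w → ∀ y, (i : ℕ) < y → y ≤ (j : ℕ) →
      pc n α c y + 1 ≤ pc n γ c y := by
    intro c hvc hcw y hy1 hy2
    by_contra hcon
    have hc1 : 1 ≤ c := by omega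
    have hEq : pc n γ c y = pc n α c y := by
      have := (hb c hc1).2 y
      omega
    have hyt1 : y ≤ t1 := by omega
    have hQγ : (Qset n γ c y t1).card ≤ (Qset n γ w y t1).card := by
      apply Finset.card_le_card
      intro k hk
      rw [mem_Qset] at *
      obtain ⟨g1, g2, g3⟩ := hk
      refine ⟨g1, g2, ?_⟩
      by_contra hkw
      have hkC : k ∈ Cand := Finset.mem_filter.2
        ⟨Finset.mem_univ k, by omega, g2, by omega⟩
      have := hvmax k hkC
      omega
    have hQα : (Qset n α w y t1).card ≤ (Qset n α c y t1).card := by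
      apply Finset.card_le_card
      intro k hk
      rw [mem_Qset] at *
      obtain ⟨g1, g2, g3⟩ := hk
      exact ⟨g1, g2, by omega⟩
    have a1 := pc_add_Q n γ c hyt1
    have a2 := pc_add_Q n α c hyt1
    have a3 := pc_add_Q n γ w hyt1
    have a4 := pc_add_Q n α w hyt1
    have a6 := hlt y hy1 (by omega)
    have a7 := (hb c hc1).2 t1
    omega
  -- the swap
  have hfij : i < j := by rw [Fin.lt_def]; exact hij
  refine ⟨fun k => γ (Equiv.swap i j k), ?_, ?_⟩
  · refine ⟨i, j, hfij, ?_, ?_⟩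
    · show γ (Equiv.swap i j i) < γ (Equiv.swap i j j)
      rw [Equiv.swap_apply_left, Equiv.swap_apply_right]
      omega
    · funext k
      show γ k = γ (Equiv.swap i j (Equiv.swap i j k))
      rw [Equiv.swap_apply_self]
  · rw [bruhatLE_pc]
    intro c hc
    constructor
    · rw [pc_swap_high hfij j.isLt]; exact (hb c hc).1
    · intro y
      rcases le_or_gt y (i : ℕ) with hy | hy
      · unfold pc; rw [Pset_swap_low hfij hy]; exact (hb c hc).2 y
      · rcases le_or_gt y (j : ℕ) with hy2 | hy2
        · by_cases hcv : c ≤ γ j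
          · have hci : c ≤ γ i := by omega
            rw [pc_swap_mid_lo hfij hy hy2 hcv hci]; exact (hb c hc).2 y
          · by_cases hcw : c ≤ γ i
            · have e := pc_swap_mid_sub hfij hy hy2 hcv hcw
              have k := hkey c (by omega) hcw y hy hy2
              omega
            · rw [pc_swap_mid_none hfij hy hy2 hcv hcw]; exact (hb c hc).2 y
        · rw [pc_swap_high hfij hy2]; exact (hb c hc).2 y


/-- left swap order coincides with Bruhat order. -/
theorem stmt9 (n : ℕ) (α γ : Fin n → ℕ) :
    leftSwapLE n γ α ↔ bruhatLE n γ α := by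

  constructor
  · intro h
    induction h with
    | refl => exact bruhatLE_refl n γ
    | tail hab hstep ih => exact bruhatLE_trans ih (leftSwapStep_bruhat hstep)
  · intro h
    have main : ∀ N (g : Fin n → ℕ), mu n g ≤ N → bruhatLE n g α → leftSwapLE n g α := by
      intro N
      induction N with
      | zero =>
        intro g hg hbg
        by_cases hga : g = α
        · subst hga; exact Relation.ReflTransGen.refl
        · obtain ⟨x, hstep, hbx⟩ := exists_step hbg hga
          have := leftSwapStep_mu hstep
          omega
      | succ N ih =>
        intro g hg hbg
        by_cases hga : g = α
        · subst hga; exact Relation.ReflTransGen.refl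
        · obtain ⟨x, hstep, hbx⟩ := exists_step hbg hga
          have hμ := leftSwapStep_mu hstep
          exact Relation.ReflTransGen.head hstep (ih x (by omega) hbx)
    exact main (mu n γ) γ le_rfl h
end

section
/- Let α be a weak composition of length n and S ⊆ [n] with S ≤ supp(α). Then M(α, S) exists and M(α, S) ⪯ α in the left swap order (equivalently, M(α, S) ≤ α in Bruhat order). -/
namespace S11
variable {n : ℕ}

/-- number of elements of `A` that are `< x` (as naturals). -/
def cnt (A : Finset (Fin n)) (x : ℕ) : ℤ :=
  ((A.filter (fun i => i.val < x)).card : ℤ)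

lemma cnt_nonneg (A : Finset (Fin n)) (x : ℕ) : 0 ≤ cnt A x := Int.natCast_nonneg _

lemma cnt_zero (A : Finset (Fin n)) : cnt A 0 = 0 := by simp [cnt]

/-- indicator of whether `x` (a natural) is an element of `A`. -/
def ind (A : Finset (Fin n)) (x : ℕ) : ℤ :=
  if h : x < n then (if ⟨x, h⟩ ∈ A then 1 else 0) else 0

lemma ind_nonneg (A : Finset (Fin n)) (x : ℕ) : 0 ≤ ind A x := by
  unfold ind
  split
  · split <;> norm_num
  · norm_num

lemma ind_le_one (A : Finset (Fin n)) (x : ℕ) : ind A x ≤ 1 := by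
  unfold ind
  split
  · split <;> norm_num
  · norm_num

lemma ind_mono {A B : Finset (Fin n)} (h : A ⊆ B) (x : ℕ) : ind A x ≤ ind B x := by
  unfold ind
  split
  · split
    · next h1 => simp [h h1]
    · split <;> norm_num
  · norm_num

lemma ind_mem {A : Finset (Fin n)} {x : ℕ} (hx : x < n) (hm : ⟨x, hx⟩ ∈ A) : ind A x = 1 := by
  simp [ind, hx, hm]

lemma cnt_succ (A : Finset (Fin n)) (x : ℕ) : cnt A (x + 1) = cnt A x + ind A x := by
  unfold cnt ind
  by_cases h : x < n
  · have heq : A.filter (fun i => i.val < x + 1)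
        = (A.filter (fun i => i.val < x)) ∪ (A.filter (fun i => i = ⟨x, h⟩)) := by
      ext i
      simp only [Finset.mem_union, Finset.mem_filter]
      constructor
      · rintro ⟨hi, hlt⟩
        rcases Nat.lt_succ_iff_lt_or_eq.mp hlt with h' | h'
        · exact Or.inl ⟨hi, h'⟩
        · exact Or.inr ⟨hi, Fin.ext h'⟩
      · rintro (⟨hi, hlt⟩ | ⟨hi, rfl⟩)
        · exact ⟨hi, hlt.trans (Nat.lt_succ_self x)⟩
        · exact ⟨hi, Nat.lt_succ_self x⟩
    rw [heq, Finset.card_union_of_disjoint]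
    · rw [Finset.filter_eq']
      by_cases hm : (⟨x, h⟩ : Fin n) ∈ A <;> simp [hm, h]
    · refine Finset.disjoint_left.mpr ?_
      rintro i hi1 hi2
      simp only [Finset.mem_filter] at hi1 hi2
      rcases hi2 with ⟨_, rfl⟩
      exact lt_irrefl _ hi1.2
  · have hx : A.filter (fun i => i.val < x + 1) = A.filter (fun i => i.val < x) := by
      apply Finset.filter_congr
      intro i _
      have h1 : (i : ℕ) < x := lt_of_lt_of_le i.2 (le_of_not_gt h)
      simp [h1, h1.trans (Nat.lt_succ_self x)]
    rw [hx]
    simp [h]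

lemma cnt_mono (A : Finset (Fin n)) : Monotone (cnt A) := by
  apply monotone_nat_of_le_succ
  intro x
  rw [cnt_succ]
  linarith [ind_nonneg A x]

lemma cnt_of_le_n (A : Finset (Fin n)) {x : ℕ} (h : n ≤ x) : cnt A x = (A.card : ℤ) := by
  unfold cnt
  congr 2
  rw [Finset.filter_true_of_mem]
  intro i _
  exact lt_of_lt_of_le i.2 h

lemma cnt_subset {A B : Finset (Fin n)} (h : A ⊆ B) (x : ℕ) : cnt A x ≤ cnt B x := by
  unfold cnt
  exact_mod_cast Finset.card_le_card (Finset.filter_subset_filter _ h)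

lemma cnt_diff_mono {A B : Finset (Fin n)} (h : A ⊆ B) {x y : ℕ} (hxy : x ≤ y) :
    cnt A y - cnt A x ≤ cnt B y - cnt B x := by
  induction y with
  | zero =>
    have : x = 0 := Nat.le_zero.mp hxy
    subst this; simp
  | succ y ih =>
    rcases Nat.lt_succ_iff_lt_or_eq.mp (Nat.lt_succ_of_le hxy) with h' | h'
    · have h2 := ih (Nat.lt_succ_iff.mp h')
      have := ind_mono h y
      rw [cnt_succ, cnt_succ]
      linarith
    · subst h'; simp

/-! ### sorted enumeration vs counting -/

lemma map_do_aux (L : List (Fin n)) :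
    (List.map (fun i => i + 1) (do let a ← L; pure ((a : ℕ))))
      = L.map (fun i : Fin n => (i : ℕ) + 1) := by
  induction L with
  | nil => rfl
  | cons a l ih => simp_all [List.map_cons]

lemma jthLargestF_def' (S : Finset (Fin n)) (j : ℕ) :
    jthLargestF n S j
      = (((Finset.sort S (· ≤ ·)).reverse).map (fun i : Fin n => (i : ℕ) + 1)).getD j 0 := by
  unfold jthLargestF
  rw [map_do_aux]

lemma image_orderEmbOfFin (S : Finset (Fin n)) {m : ℕ} (h : S.card = m) :
    Finset.univ.image (S.orderEmbOfFin h) = S := by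
  ext i
  simp only [Finset.mem_image, Finset.mem_univ, true_and]
  constructor
  · rintro ⟨k, rfl⟩; exact Finset.orderEmbOfFin_mem S h k
  · intro hi
    have : i ∈ Set.range (S.orderEmbOfFin h) := by
      rw [Finset.range_orderEmbOfFin]; exact hi
    exact this

lemma cnt_eq_card_lt (S : Finset (Fin n)) {m : ℕ} (h : S.card = m) (x : ℕ) :
    cnt S x = ((Finset.univ.filter (fun k : Fin m => (S.orderEmbOfFin h k).val < x)).card : ℤ) := by
  unfold cnt
  have himg : S.filter (fun i => i.val < x)
      = (Finset.univ.filter (fun k : Fin m => (S.orderEmbOfFin h k).val < x)).image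
          (S.orderEmbOfFin h) := by
    conv_lhs => rw [← image_orderEmbOfFin S h]
    rw [Finset.filter_image]
  rw [himg, Finset.card_image_of_injective _ (S.orderEmbOfFin h).injective]

lemma orderEmbOfFin_lt_iff_lt_cnt (S : Finset (Fin n)) {m : ℕ} (h : S.card = m) (x : ℕ)
    (k : Fin m) : (S.orderEmbOfFin h k).val < x ↔ (k : ℤ) < cnt S x := by
  classical
  set f := S.orderEmbOfFin h with hf
  set L := Finset.univ.filter (fun k : Fin m => (f k).val < x) with hL
  have hcnt : cnt S x = (L.card : ℤ) := cnt_eq_card_lt S h x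
  have hdc : ∀ k' k : Fin m, k' ≤ k → k ∈ L → k' ∈ L := by
    intro k' k hk hkL
    simp only [hL, Finset.mem_filter, Finset.mem_univ, true_and] at *
    have hmono : f k' ≤ f k := f.monotone hk
    exact lt_of_le_of_lt (show (f k').val ≤ (f k).val from hmono) hkL
  have key : k ∈ L ↔ (k : ℕ) < L.card := by
    constructor
    · intro hk
      have hsub : Finset.Iic k ⊆ L := fun k' hk' => hdc k' k (Finset.mem_Iic.mp hk') hk
      have := Finset.card_le_card hsub
      rw [Fin.card_Iic] at this
      omega
    · intro hk
      by_contra hnot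
      have hsub : L ⊆ Finset.Iio k := by
        intro k' hk'
        rw [Finset.mem_Iio]
        by_contra hge
        exact hnot (hdc k k' (le_of_not_gt hge) hk')
      have := Finset.card_le_card hsub
      rw [Fin.card_Iio] at this
      omega
  have hmem : (f k).val < x ↔ k ∈ L := by simp [hL]
  rw [hmem, key, hcnt]
  exact_mod_cast Iff.rfl

lemma jthLargestF_eq (S : Finset (Fin n)) {m : ℕ} (h : S.card = m) {j : ℕ} (hj : j < m)
    (k : Fin m) (hk : (k : ℕ) = m - 1 - j) :
    jthLargestF n S j = (S.orderEmbOfFin h k).val + 1 := by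
  rw [jthLargestF_def']
  have hlen : ((Finset.sort S (· ≤ ·)).reverse.map (fun i : Fin n => (i : ℕ) + 1)).length = m := by
    simp [h]
  rw [List.getD_eq_getElem _ _ (by rw [hlen]; exact hj)]
  have hlen3 : (Finset.sort S (· ≤ ·)).length = m := by simp [h]
  rw [List.getElem_map, List.getElem_reverse]
  rw [Finset.orderEmbOfFin_apply]
  congr 2
  simp [hlen3, hk]

/-- main bridge: `setLEF` is equivalent to pointwise counting domination. -/
lemma setLEF_iff_cnt (S T : Finset (Fin n)) :
    setLEF n S T ↔ (S.card = T.card ∧ ∀ x : ℕ, cnt T x ≤ cnt S x) := by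
  constructor
  · rintro ⟨hcard, hjth⟩
    refine ⟨hcard, ?_⟩
    intro x
    set m := S.card with hm
    have hT : T.card = m := hcard.symm
    have helem : ∀ k : Fin m, (S.orderEmbOfFin rfl k).val ≤ (T.orderEmbOfFin hT k).val := by
      intro k
      have hkm : (k : ℕ) < m := k.2
      have hj : m - 1 - (k : ℕ) < m := by omega
      have h1 := hjth _ hj
      rw [jthLargestF_eq S rfl hj k (by omega), jthLargestF_eq T hT hj k (by omega)] at h1
      omega
    rw [cnt_eq_card_lt S rfl x, cnt_eq_card_lt T hT x]
    have hsub : (Finset.univ.filter (fun k : Fin m => (T.orderEmbOfFin hT k).val < x))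
        ⊆ (Finset.univ.filter (fun k : Fin m => (S.orderEmbOfFin rfl k).val < x)) := by
      intro k hk
      simp only [Finset.mem_filter, Finset.mem_univ, true_and] at *
      exact lt_of_le_of_lt (helem k) hk
    exact_mod_cast Finset.card_le_card hsub
  · rintro ⟨hcard, hcnt⟩
    refine ⟨hcard, ?_⟩
    intro j hj
    set m := S.card with hm
    have hT : T.card = m := hcard.symm
    rw [hm] at hj
    set k : Fin m := ⟨m - 1 - j, by omega⟩ with hkdef
    rw [jthLargestF_eq S rfl hj k rfl, jthLargestF_eq T hT hj k rfl]
    have h1 : (T.orderEmbOfFin hT k).val < (T.orderEmbOfFin hT k).val + 1 := Nat.lt_succ_self _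
    rw [orderEmbOfFin_lt_iff_lt_cnt T hT] at h1
    have h2 : (k : ℤ) < cnt S ((T.orderEmbOfFin hT k).val + 1) := lt_of_lt_of_le h1 (hcnt _)
    rw [← orderEmbOfFin_lt_iff_lt_cnt S rfl] at h2
    omega

/-! ### Bruhat order in counting form -/

lemma mem_col {γ : Fin n → ℕ} {c : ℕ} {i : Fin n} : i ∈ col n γ c ↔ c ≤ γ i := by
  simp [col]

lemma ind_col (γ : Fin n → ℕ) (c : ℕ) (x : ℕ) :
    ind (col n γ c) x = if h : x < n then (if c ≤ γ ⟨x, h⟩ then 1 else 0) else 0 := by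
  unfold ind
  split
  · simp [mem_col]
  · rfl

lemma ind_col_lt (γ : Fin n → ℕ) (c : ℕ) {x : ℕ} (h : x < n) :
    ind (col n γ c) x = if c ≤ γ ⟨x, h⟩ then 1 else 0 := by
  unfold ind
  rw [dif_pos h]
  simp [mem_col]

/-- counting form of the Bruhat order. -/
def cbruhat (γ α : Fin n → ℕ) : Prop :=
  ∀ c, 1 ≤ c → (col n γ c).card = (col n α c).card ∧
    ∀ x : ℕ, cnt (col n α c) x ≤ cnt (col n γ c) x

lemma bruhatLE_iff_cbruhat (γ α : Fin n → ℕ) : bruhatLE n γ α ↔ cbruhat γ α := by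
  unfold bruhatLE cbruhat setLEF
  constructor
  · intro h c hc
    have h2 := (setLEF_iff_cnt (col n γ c) (col n α c)).mp (h c hc)
    exact h2
  · intro h c hc
    exact (setLEF_iff_cnt (col n γ c) (col n α c)).mpr (h c hc)

/-- weighted sum used as termination measure. -/
def Wsum (α : Fin n → ℕ) : ℕ := ∑ i : Fin n, (i : ℕ) * α i

/-! ### the swap lemma -/

lemma exists_swap_step (α μ : Fin n → ℕ) (h : cbruhat μ α) (hne : μ ≠ α) :
    ∃ β : Fin n → ℕ, leftSwapStep n β α ∧ cbruhat μ β ∧ Wsum β < Wsum α := by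
  classical
  -- Step 1: there is an index where μ < α
  have hex : ∃ i : Fin n, μ i < α i := by
    by_contra hno
    push_neg at hno
    apply hne
    funext i
    by_contra hine
    have hgt : α i < μ i := lt_of_le_of_ne (hno i) (Ne.symm hine)
    have hsub : col n α (α i + 1) ⊆ col n μ (α i + 1) := by
      intro j hj
      rw [mem_col] at *
      exact hj.trans (hno j)
    have hcard := (h (α i + 1) (by omega)).1
    have hEq : col n μ (α i + 1) = col n α (α i + 1) :=
      (Finset.eq_of_subset_of_card_le hsub (le_of_eq hcard)).symm
    have : i ∈ col n μ (α i + 1) := mem_col.mpr hgt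
    rw [hEq, mem_col] at this
    omega
  -- Step 2: least such index q
  set Q : Finset (Fin n) := Finset.univ.filter (fun i => μ i < α i) with hQ
  have hQne : Q.Nonempty := by
    obtain ⟨i, hi⟩ := hex
    exact ⟨i, by simp [hQ, hi]⟩
  set q : Fin n := Q.min' hQne with hq
  have hqlt : μ q < α q := by
    have := Q.min'_mem hQne
    simp [hQ] at this
    exact this
  have hqmin : ∀ i : Fin n, i < q → α i ≤ μ i := by
    intro i hi
    by_contra hcon
    have : i ∈ Q := by simp [hQ]; omega
    exact absurd (Q.min'_le i this) (not_le.mpr hi)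
  set u := μ q with hu
  set v := α q with hv
  -- Step 4: monotonicity of the defect up to q
  have Dmono : ∀ c x y : ℕ, x ≤ y → y ≤ q.val →
      cnt (col n α c) y + cnt (col n μ c) x ≤ cnt (col n α c) x + cnt (col n μ c) y := by
    intro c x y hxy hyq
    induction y with
    | zero =>
      have : x = 0 := Nat.le_zero.mp hxy
      subst this; omega
    | succ y ih =>
      rcases Nat.lt_succ_iff_lt_or_eq.mp (Nat.lt_succ_of_le hxy) with h' | h'
      · have h2 := ih (Nat.lt_succ_iff.mp h') (by omega)
        have hyn : y < n := lt_of_lt_of_le (by omega) (le_of_lt q.2)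
        have hile : α ⟨y, hyn⟩ ≤ μ ⟨y, hyn⟩ := by
          apply hqmin
          rw [Fin.lt_def]
          simp
          omega
        have hind : ind (col n α c) y ≤ ind (col n μ c) y := by
          rw [ind_col, ind_col]
          simp only [hyn, dif_pos]
          split
          · next hc => simp [hc.trans hile]
          · split <;> norm_num
        rw [cnt_succ, cnt_succ]
        linarith
      · subst h'; omega
  -- Step 5: defect at least 1 at q for levels in (u, v]
  have hDq : ∀ c : ℕ, u < c → c ≤ v → cnt (col n α c) q.val + 1 ≤ cnt (col n μ c) q.val := by
    intro c hc1 hc2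
    have h1 := (h c (by omega)).2 (q.val + 1)
    have hα : cnt (col n α c) (q.val + 1) = cnt (col n α c) q.val + 1 := by
      rw [cnt_succ, ind_col]
      simp only [q.2, dif_pos]
      have : (⟨q.val, q.2⟩ : Fin n) = q := rfl
      rw [this, if_pos hc2]
    have hμ2 : cnt (col n μ c) (q.val + 1) = cnt (col n μ c) q.val := by
      rw [cnt_succ, ind_col]
      simp only [q.2, dif_pos]
      have : (⟨q.val, q.2⟩ : Fin n) = q := rfl
      rw [this, if_neg (by omega)]
      ring
    omega
  -- Step 6: least rise position for each level in (u, v]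
  have hrex : ∀ c : ℕ, u < c ∧ c ≤ v → ∃ x : ℕ, cnt (col n α c) x + 1 ≤ cnt (col n μ c) x :=
    fun c hc => ⟨q.val, hDq c hc.1 hc.2⟩
  set r : ℕ → ℕ := fun c => if hc : u < c ∧ c ≤ v then Nat.find (hrex c hc) else 0 with hrdef
  have hrP : ∀ c : ℕ, (hc : u < c ∧ c ≤ v) →
      cnt (col n α c) (r c) + 1 ≤ cnt (col n μ c) (r c) := by
    intro c hc
    have : r c = Nat.find (hrex c hc) := by rw [hrdef]; simp [hc]
    rw [this]
    exact Nat.find_spec (hrex c hc)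
  have hrmin : ∀ c : ℕ, (hc : u < c ∧ c ≤ v) → ∀ x, x < r c →
      cnt (col n μ c) x ≤ cnt (col n α c) x := by
    intro c hc x hx
    have hr : r c = Nat.find (hrex c hc) := by rw [hrdef]; simp [hc]
    rw [hr] at hx
    have := Nat.find_min (hrex c hc) hx
    omega
  have hrpos : ∀ c : ℕ, (hc : u < c ∧ c ≤ v) → 1 ≤ r c := by
    intro c hc
    by_contra hcon
    have h0 : r c = 0 := by omega
    have := hrP c hc
    rw [h0, cnt_zero, cnt_zero] at this
    omega
  have hrq : ∀ c : ℕ, (hc : u < c ∧ c ≤ v) → r c ≤ q.val := by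
    intro c hc
    by_contra hcon
    have := hrmin c hc q.val (by omega)
    have := hDq c hc.1 hc.2
    omega
  -- Step 7: the swap source p
  have huv : u < v := hqlt
  set P' : Finset ℕ := (Finset.Icc (u+1) v).image r with hP'
  have hP'ne : P'.Nonempty := by
    refine ⟨r (u+1), ?_⟩
    rw [hP']
    exact Finset.mem_image_of_mem r (Finset.mem_Icc.mpr ⟨le_refl _, by omega⟩)
  set p' := P'.max' hP'ne with hp'def
  obtain ⟨cb, hcbmem, hcbr⟩ := Finset.mem_image.mp (P'.max'_mem hP'ne)
  have hcb : u < cb ∧ cb ≤ v := by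
    rw [Finset.mem_Icc] at hcbmem
    omega
  have hp'le : ∀ c : ℕ, u < c ∧ c ≤ v → r c ≤ p' := by
    intro c hc
    apply Finset.le_max'
    rw [hP']
    exact Finset.mem_image_of_mem r (Finset.mem_Icc.mpr ⟨by omega, hc.2⟩)
  have hp'1 : 1 ≤ p' := by rw [hp'def, ← hcbr]; exact hrpos cb hcb
  have hp'q : p' ≤ q.val := by rw [hp'def, ← hcbr]; exact hrq cb hcb
  set p := p' - 1 with hpdef
  have hpp' : p + 1 = p' := by omega
  have hpn : p < n := lt_of_lt_of_le (by omega) (le_of_lt q.2)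
  -- rise at p for level cb
  have hcntp : cnt (col n μ cb) p = cnt (col n α cb) p := by
    have h1 := hrmin cb hcb p (by omega)
    have h2 := (h cb (by omega)).2 p
    omega
  have hrise : cb ≤ μ ⟨p, hpn⟩ ∧ ¬ cb ≤ α ⟨p, hpn⟩ := by
    have h1 := hrP cb hcb
    rw [hcbr, ← hp'def, ← hpp', cnt_succ, cnt_succ, hcntp,
      ind_col_lt α cb hpn, ind_col_lt μ cb hpn] at h1
    constructor
    · by_contra hcon
      rw [if_neg hcon] at h1
      split_ifs at h1 <;> omega
    · intro hcon
      rw [if_pos hcon] at h1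
      split_ifs at h1 <;> omega
  set pF : Fin n := ⟨p, hpn⟩ with hpF
  have hαpcb : α pF < cb := by
    have := hrise.2
    omega
  have hαplt : α pF < α q := lt_of_lt_of_le hαpcb hcb.2
  have hpFq : pF < q := by
    rw [Fin.lt_def]
    simp [hpF]
    omega
  -- Step 8: the box
  have box : ∀ c x : ℕ, α pF < c → c ≤ v → p + 1 ≤ x → x ≤ q.val →
      cnt (col n α c) x + 1 ≤ cnt (col n μ c) x := by
    intro c x hc1 hc2 hx1 hx2
    have hstep1 : cnt (col n α c) (p+1) + 1 ≤ cnt (col n μ c) (p+1) := by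
      rcases le_or_gt c cb with hccb | hccb
      · rw [cnt_succ, cnt_succ, ind_col_lt α c hpn, ind_col_lt μ c hpn]
        rw [if_pos (hccb.trans hrise.1),
          if_neg (show ¬ c ≤ α (⟨p, hpn⟩ : Fin n) by show ¬ c ≤ α pF; omega)]
        have := (h c (by omega)).2 p
        linarith
      · have hc' : u < c ∧ c ≤ v := ⟨by omega, hc2⟩
        have h1 := hrP c hc'
        have h2 := Dmono c (r c) (p+1) (by rw [hpp']; exact hp'le c hc') (by omega)
        linarith
    have h3 := Dmono c (p+1) x hx1 hx2
    linarith
  -- the swapped composition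
  set σ := Equiv.swap pF q with hσ
  set β : Fin n → ℕ := fun k => α (σ k) with hβ
  have hβpF : β pF = α q := by rw [hβ]; simp [hσ, Equiv.swap_apply_left]
  have hβq : β q = α pF := by rw [hβ]; simp [hσ, Equiv.swap_apply_right]
  have hβother : ∀ k : Fin n, k ≠ pF → k ≠ q → β k = α k := by
    intro k h1 h2
    rw [hβ]
    simp [hσ, Equiv.swap_apply_of_ne_of_ne h1 h2]
  -- counting identity for β
  have hcnt_swap : ∀ c x : ℕ, cnt (col n β c) x = cnt (col n α c) x +
      ((if c ≤ α q then (1:ℤ) else 0) - (if c ≤ α pF then 1 else 0)) *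
      ((if p < x then (1:ℤ) else 0) - (if q.val < x then 1 else 0)) := by
    intro c x
    induction x with
    | zero => simp [cnt_zero]
    | succ x ih =>
      rw [cnt_succ, cnt_succ, ih]
      by_cases hx : x < n
      · rw [ind_col_lt α c hx, ind_col_lt β c hx]
        by_cases hxp : x = p
        · have hfx : (⟨x, hx⟩ : Fin n) = pF := by rw [hpF]; exact Fin.ext hxp
          rw [hfx, hβpF]
          have e1 : p < x + 1 := by omega
          have e2 : ¬ (p < x) := by omega
          have e3 : ¬ (q.val < x + 1) := by omega
          have e4 : ¬ (q.val < x) := by omega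
          rw [if_pos e1, if_neg e2, if_neg e3, if_neg e4]
          split_ifs <;> ring
        · by_cases hxq : x = q.val
          · have hfx : (⟨x, hx⟩ : Fin n) = q := Fin.ext hxq
            rw [hfx, hβq]
            have e1 : p < x + 1 := by omega
            have e2 : p < x := by omega
            have e3 : q.val < x + 1 := by omega
            have e4 : ¬ (q.val < x) := by omega
            rw [if_pos e1, if_pos e2, if_pos e3, if_neg e4]
            split_ifs <;> ring
          · have hfx : β ⟨x, hx⟩ = α ⟨x, hx⟩ := by
              apply hβother
              · intro hcon; apply hxp; rw [hpF] at hcon; exact congrArg Fin.val hcon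
              · intro hcon; apply hxq; exact congrArg Fin.val hcon
            rw [hfx]
            have e1 : (p < x + 1) ↔ (p < x) := by omega
            have e3 : (q.val < x + 1) ↔ (q.val < x) := by omega
            rw [if_congr e1 rfl rfl, if_congr e3 rfl rfl]
            ring
      · unfold ind
        rw [dif_neg hx, dif_neg hx]
        have hxn : n ≤ x := le_of_not_gt hx
        have e1 : (p < x + 1) ↔ (p < x) := by omega
        have e3 : (q.val < x + 1) ↔ (q.val < x) := by
          have := q.2
          omega
        rw [if_congr e1 rfl rfl, if_congr e3 rfl rfl]
        ring
  refine ⟨β, ⟨pF, q, hpFq, hαplt, rfl⟩, ?_, ?_⟩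
  · -- cbruhat μ β
    intro c hc
    constructor
    · -- cards
      have h1 := hcnt_swap c n
      rw [if_pos hpn, if_pos q.2] at h1
      have h2 : cnt (col n β c) n = cnt (col n α c) n := by rw [h1]; ring
      rw [cnt_of_le_n _ (le_refl n), cnt_of_le_n _ (le_refl n)] at h2
      have h3 := (h c hc).1
      omega
    · intro x
      rw [hcnt_swap c x]
      have hbase := (h c hc).2 x
      have hprod : ((if c ≤ α q then (1:ℤ) else 0) - (if c ≤ α pF then 1 else 0)) *
          ((if p < x then (1:ℤ) else 0) - (if q.val < x then 1 else 0))
          ≤ (if (α pF < c ∧ c ≤ α q ∧ p < x ∧ x ≤ q.val) then (1:ℤ) else 0) := by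
        have hle : α pF < α q := hαplt
        have hpq : p < q.val := by omega
        split_ifs <;> omega
      by_cases hcond : α pF < c ∧ c ≤ α q ∧ p < x ∧ x ≤ q.val
      · have hb := box c x hcond.1 hcond.2.1 (by omega) hcond.2.2.2
        rw [if_pos hcond] at hprod
        linarith
      · rw [if_neg hcond] at hprod
        linarith
  · -- Wsum decreases
    have hre : Wsum β = ∑ i : Fin n, ((σ i : ℕ)) * α i := by
      unfold Wsum
      rw [← Equiv.sum_comp σ (fun i => ((σ i : ℕ)) * α i)]
      apply Finset.sum_congr rfl
      intro i _
      rw [hβ]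
      simp [hσ, Equiv.swap_apply_self]
    have hsplit : ∀ f : Fin n → ℕ, ∑ i : Fin n, f i
        = f pF + (f q + ∑ i ∈ (Finset.univ.erase pF).erase q, f i) := by
      intro f
      rw [← Finset.add_sum_erase _ f (Finset.mem_univ pF)]
      congr 1
      rw [← Finset.add_sum_erase _ f (Finset.mem_erase.mpr ⟨(Fin.ne_of_gt hpFq), Finset.mem_univ q⟩)]
    have hsame : ∀ i ∈ (Finset.univ.erase pF).erase q, ((σ i : ℕ)) * α i = (i : ℕ) * α i := by
      intro i hi
      rw [Finset.mem_erase] at hi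
      obtain ⟨hiq, hi2⟩ := hi
      rw [Finset.mem_erase] at hi2
      rw [hσ, Equiv.swap_apply_of_ne_of_ne hi2.1 hiq]
    have hkey : (σ pF : ℕ) * α pF + (σ q : ℕ) * α q < (pF : ℕ) * α pF + (q : ℕ) * α q := by
      rw [hσ]
      rw [Equiv.swap_apply_left, Equiv.swap_apply_right]
      have hv1 : (pF : ℕ) < (q : ℕ) := hpFq
      have hv2 : α pF < α q := hαplt
      nlinarith
    rw [hre, hsplit (fun i => ((σ i : ℕ)) * α i)]
    unfold Wsum
    rw [hsplit (fun i => (i : ℕ) * α i)]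
    rw [Finset.sum_congr rfl hsame]
    omega

/-- Bruhat smaller implies reachable by left swaps. -/
lemma cbruhat_to_leftSwapLE : ∀ (N : ℕ) (α μ : Fin n → ℕ), Wsum α ≤ N → cbruhat μ α →
    leftSwapLE n μ α := by
  intro N
  induction N with
  | zero =>
    intro α μ hW hb
    by_cases hne : μ = α
    · subst hne; exact Relation.ReflTransGen.refl
    · obtain ⟨β, _, _, hlt⟩ := exists_swap_step α μ hb hne
      omega
  | succ N ih =>
    intro α μ hW hb
    by_cases hne : μ = α
    · subst hne; exact Relation.ReflTransGen.refl
    · obtain ⟨β, hstep, hb', hlt⟩ := exists_swap_step α μ hb hne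
      exact (ih β μ (by omega) hb').tail hstep

/-! ### existence of the Bruhat maximum -/

lemma col_subset_supp (γ : Fin n → ℕ) {c : ℕ} (hc : 1 ≤ c) : col n γ c ⊆ suppC n γ := by
  intro i hi
  rw [mem_col] at hi
  simp only [suppC, Finset.mem_filter, Finset.mem_univ, true_and]
  omega

lemma suppC_eq_col_one (γ : Fin n → ℕ) : suppC n γ = col n γ 1 := by
  ext i
  simp only [suppC, col, Finset.mem_filter, Finset.mem_univ, true_and]
  omega

lemma col_anti (γ : Fin n → ℕ) {c c' : ℕ} (h : c ≤ c') : col n γ c' ⊆ col n γ c := by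
  intro i hi
  rw [mem_col] at *
  omega

lemma exists_bruhat_max (α : Fin n → ℕ) (S : Finset (Fin n))
    (hS : setLEF n S (suppC n α)) : ∃ μ : Fin n → ℕ, isBruhatMax n α S μ := by
  classical
  obtain ⟨hScard, hScnt⟩ := (setLEF_iff_cnt S (suppC n α)).mp hS
  -- feasibility
  have feas : ∀ c : ℕ, 1 ≤ c → ∀ y : ℕ, cnt (col n α c) y ≤ cnt S y := by
    intro c hc y
    exact le_trans (cnt_subset (col_subset_supp α hc) y) (hScnt y)
  have hne : ∀ x : ℕ, (Finset.Icc x (max x n)).Nonempty :=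
    fun x => Finset.nonempty_Icc.mpr (le_max_left x n)
  -- the greedy profile
  set g : ℕ → ℕ → ℤ := fun c x =>
    (Finset.Icc x (max x n)).sup' (hne x) (fun y => cnt (col n α c) y - cnt S y) + cnt S x
    with hgdef
  have hg_ge : ∀ c x, cnt (col n α c) x ≤ g c x := by
    intro c x
    have h1 : cnt (col n α c) x - cnt S x ≤
        (Finset.Icc x (max x n)).sup' (hne x) (fun y => cnt (col n α c) y - cnt S y) :=
      Finset.le_sup' (fun y => cnt (col n α c) y - cnt S y) (Finset.mem_Icc.mpr ⟨le_refl x, le_max_left x n⟩)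
    have hgx : g c x = (Finset.Icc x (max x n)).sup' (hne x)
        (fun y => cnt (col n α c) y - cnt S y) + cnt S x := by simp only [hgdef]
    rw [hgx]
    linarith
  have hg_zero : ∀ c, 1 ≤ c → g c 0 = 0 := by
    intro c hc
    have h1 : (Finset.Icc 0 (max 0 n)).sup' (hne 0) (fun y => cnt (col n α c) y - cnt S y) ≤ 0 := by
      apply Finset.sup'_le
      intro y _
      have := feas c hc y
      linarith
    have h2 : (0:ℤ) ≤ (Finset.Icc 0 (max 0 n)).sup' (hne 0)
        (fun y => cnt (col n α c) y - cnt S y) := by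
      have h3 : cnt (col n α c) 0 - cnt S 0 ≤ (Finset.Icc 0 (max 0 n)).sup' (hne 0)
          (fun y => cnt (col n α c) y - cnt S y) :=
        Finset.le_sup' (fun y => cnt (col n α c) y - cnt S y)
          (Finset.mem_Icc.mpr ⟨le_refl 0, Nat.zero_le _⟩)
      rw [cnt_zero, cnt_zero] at h3
      simpa using h3
    have hgx : g c 0 = (Finset.Icc 0 (max 0 n)).sup' (hne 0)
        (fun y => cnt (col n α c) y - cnt S y) + cnt S 0 := by simp only [hgdef]
    rw [hgx, cnt_zero]
    linarith
  have hg_mono : ∀ c x, g c x ≤ g c (x+1) := by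
    intro c x
    obtain ⟨y₀, hy₀mem, hy₀⟩ := Finset.exists_mem_eq_sup' (hne x)
      (fun y => cnt (col n α c) y - cnt S y)
    rw [Finset.mem_Icc] at hy₀mem
    rcases Nat.lt_or_ge x y₀ with hxy | hxy
    · -- y₀ ≥ x+1 : same term appears in the sup at x+1
      have hmem' : y₀ ∈ Finset.Icc (x+1) (max (x+1) n) := by
        rw [Finset.mem_Icc]
        constructor
        · omega
        · calc y₀ ≤ max x n := hy₀mem.2
            _ ≤ max (x+1) n := max_le_max (by omega) (le_refl n)
      have h1 : cnt (col n α c) y₀ - cnt S y₀ ≤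
          (Finset.Icc (x+1) (max (x+1) n)).sup' (hne (x+1))
            (fun y => cnt (col n α c) y - cnt S y) := Finset.le_sup' (fun y => cnt (col n α c) y - cnt S y) hmem'
      have h2 := cnt_mono S (Nat.le_succ x)
      have hx1 : g c (x+1) = (Finset.Icc (x+1) (max (x+1) n)).sup' (hne (x+1))
          (fun y => cnt (col n α c) y - cnt S y) + cnt S (x+1) := by simp only [hgdef]
      have hx0 : g c x = (cnt (col n α c) y₀ - cnt S y₀) + cnt S x := by
        simp only [hgdef]
        rw [hy₀]
      rw [hx0, hx1]
      linarith
    · -- y₀ = x : g c x = cnt T x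
      have hy0x : y₀ = x := le_antisymm hxy hy₀mem.1
      have hgx : g c x = cnt (col n α c) x := by
        simp only [hgdef]
        rw [hy₀, hy0x]
        ring
      have := hg_ge c (x+1)
      have := cnt_mono (col n α c) (Nat.le_succ x)
      linarith
  have hg_step : ∀ c x, g c (x+1) ≤ g c x + ind S x := by
    intro c x
    obtain ⟨y₁, hy₁mem, hy₁⟩ := Finset.exists_mem_eq_sup' (hne (x+1))
      (fun y => cnt (col n α c) y - cnt S y)
    rw [Finset.mem_Icc] at hy₁mem
    have hgx1 : g c (x+1) = (cnt (col n α c) y₁ - cnt S y₁) + cnt S (x+1) := by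
      simp only [hgdef]
      rw [hy₁]
    have hcS : cnt S (x+1) = cnt S x + ind S x := cnt_succ S x
    rcases le_or_gt y₁ (max x n) with hin | hout
    · have hmem' : y₁ ∈ Finset.Icc x (max x n) := Finset.mem_Icc.mpr ⟨by omega, hin⟩
      have h1 : cnt (col n α c) y₁ - cnt S y₁ ≤
          (Finset.Icc x (max x n)).sup' (hne x) (fun y => cnt (col n α c) y - cnt S y) :=
        Finset.le_sup' (fun y => cnt (col n α c) y - cnt S y) hmem'
      have hgx : g c x = (Finset.Icc x (max x n)).sup' (hne x)
          (fun y => cnt (col n α c) y - cnt S y) + cnt S x := by simp only [hgdef]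
      rw [hgx1, hcS, hgx]
      linarith
    · -- y₁ beyond max x n : then n ≤ x and y₁ = x+1, counts are saturated
      have hnx : n ≤ x := by
        rcases le_or_gt n x with h' | h'
        · exact h'
        · exfalso
          have : max x n = n := by omega
          have h2 : y₁ ≤ max (x+1) n := hy₁mem.2
          have : max (x+1) n = n := by omega
          omega
      have hy1x : y₁ = x + 1 := by
        have h2 : y₁ ≤ max (x+1) n := hy₁mem.2
        have : max (x+1) n = x + 1 := by omega
        have : max x n = x := by omega
        omega
      have hc1 : cnt (col n α c) y₁ = cnt (col n α c) x := by
        rw [hy1x, cnt_of_le_n _ (by omega), cnt_of_le_n _ hnx]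
      have hc2 : cnt S y₁ = cnt S x := by
        rw [hy1x, cnt_of_le_n _ (by omega), cnt_of_le_n _ hnx]
      have hmem' : x ∈ Finset.Icc x (max x n) := Finset.mem_Icc.mpr ⟨le_refl x, le_max_left x n⟩
      have h1 : cnt (col n α c) x - cnt S x ≤
          (Finset.Icc x (max x n)).sup' (hne x) (fun y => cnt (col n α c) y - cnt S y) :=
        Finset.le_sup' (fun y => cnt (col n α c) y - cnt S y) hmem'
      have hgx : g c x = (Finset.Icc x (max x n)).sup' (hne x)
          (fun y => cnt (col n α c) y - cnt S y) + cnt S x := by simp only [hgdef]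
      rw [hgx1, hcS, hc1, hc2, hgx]
      linarith
  -- the chosen columns
  set B : ℕ → Finset (Fin n) := fun c => Finset.univ.filter (fun i => g c i.val < g c (i.val+1))
    with hBdef
  have hmemB : ∀ c (i : Fin n), i ∈ B c ↔ g c i.val < g c (i.val + 1) := by
    intro c i
    rw [hBdef]
    simp
  have hindB : ∀ c x (hx : x < n), ind (B c) x = if g c x < g c (x+1) then 1 else 0 := by
    intro c x hx
    unfold ind
    rw [dif_pos hx]
    simp only [hmemB, Fin.val_mk]
  have hBsubS : ∀ c, B c ⊆ S := by
    intro c i hi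
    rw [hmemB] at hi
    by_contra hiS
    have h0 : ind S i.val = 0 := by
      unfold ind
      rw [dif_pos i.2]
      rw [if_neg (by simpa using hiS)]
    have := hg_step c i.val
    rw [h0] at this
    omega
  have hcntB : ∀ c, 1 ≤ c → ∀ x, x ≤ n → cnt (B c) x = g c x := by
    intro c hc x
    induction x with
    | zero => intro _; rw [cnt_zero, hg_zero c hc]
    | succ x ih =>
      intro hx
      have hxn : x < n := by omega
      rw [cnt_succ, ih (by omega), hindB c x hxn]
      have h1 := hg_mono c x
      have h2 := hg_step c x
      have h3 := ind_le_one S x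
      have h4 := ind_nonneg S x
      split_ifs with hstep
      · omega
      · omega
  have hBcard : ∀ c, 1 ≤ c → ((B c).card : ℤ) = ((col n α c).card : ℤ) := by
    intro c hc
    have h1 := hcntB c hc n (le_refl n)
    rw [cnt_of_le_n _ (le_refl n)] at h1
    have h2 : g c n = ((col n α c).card : ℤ) := by
      have hub : ∀ y ∈ Finset.Icc n (max n n),
          cnt (col n α c) y - cnt S y ≤ cnt (col n α c) n - cnt S n := by
        intro y hy
        rw [Finset.mem_Icc] at hy
        rw [cnt_of_le_n (col n α c) hy.1, cnt_of_le_n S hy.1,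
          cnt_of_le_n (col n α c) (le_refl n), cnt_of_le_n S (le_refl n)]
      have hle1 := Finset.sup'_le (hne n) (fun y => cnt (col n α c) y - cnt S y) hub
      have hge1 := Finset.le_sup' (fun y => cnt (col n α c) y - cnt S y)
        (Finset.mem_Icc.mpr ⟨le_refl n, le_max_left n n⟩)
      have heq : (Finset.Icc n (max n n)).sup' (hne n)
          (fun y => cnt (col n α c) y - cnt S y) = cnt (col n α c) n - cnt S n :=
        le_antisymm hle1 hge1
      have hgx : g c n = (Finset.Icc n (max n n)).sup' (hne n)
          (fun y => cnt (col n α c) y - cnt S y) + cnt S n := by simp only [hgdef]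
      rw [hgx, heq, cnt_of_le_n (col n α c) (le_refl n)]
      ring
    omega
  have hBsetle : ∀ c, 1 ≤ c → setLEF n (B c) (col n α c) := by
    intro c hc
    rw [setLEF_iff_cnt]
    constructor
    · have := hBcard c hc; exact_mod_cast this
    · intro x
      rcases le_or_gt x n with hx | hx
      · rw [hcntB c hc x hx]
        exact hg_ge c x
      · rw [cnt_of_le_n _ (by omega), cnt_of_le_n _ (by omega)]
        have := hBcard c hc
        omega
  -- nesting
  have hBnest : ∀ c, B (c+1) ⊆ B c := by
    intro c i hi
    have hiS : i ∈ S := hBsubS (c+1) hi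
    rw [hmemB] at hi ⊢
    set x := i.val with hxdef
    have hxn : x < n := i.2
    have hindS : ind S x = 1 := by
      unfold ind
      rw [dif_pos hxn, if_pos (by simpa [hxdef] using hiS)]
    obtain ⟨y₂, hy₂mem, hy₂⟩ := Finset.exists_mem_eq_sup' (hne (x+1))
      (fun y => cnt (col n α (c+1)) y - cnt S y)
    rw [Finset.mem_Icc] at hy₂mem
    have hg'x1 : g (c+1) (x+1) = (cnt (col n α (c+1)) y₂ - cnt S y₂) + cnt S (x+1) := by
      simp only [hgdef]
      rw [hy₂]
    have hg'x_ge : cnt (col n α (c+1)) x - cnt S x + cnt S x ≤ g (c+1) x := by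
      have h1 : cnt (col n α (c+1)) x - cnt S x ≤
          (Finset.Icc x (max x n)).sup' (hne x) (fun y => cnt (col n α (c+1)) y - cnt S y) :=
        Finset.le_sup' (fun y => cnt (col n α (c+1)) y - cnt S y)
          (Finset.mem_Icc.mpr ⟨le_refl x, le_max_left x n⟩)
      have hgx : g (c+1) x = (Finset.Icc x (max x n)).sup' (hne x)
          (fun y => cnt (col n α (c+1)) y - cnt S y) + cnt S x := by simp only [hgdef]
      rw [hgx]
      linarith
    have hcS : cnt S (x+1) = cnt S x + 1 := by rw [cnt_succ, hindS]
    -- the key inequality (†)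
    have hdagger : cnt (col n α (c+1)) y₂ - cnt (col n α (c+1)) x ≥ cnt S y₂ - cnt S x := by
      have := hi
      rw [hg'x1, hcS] at this
      linarith
    have hdm : cnt (col n α (c+1)) y₂ - cnt (col n α (c+1)) x ≤
        cnt (col n α c) y₂ - cnt (col n α c) x :=
      cnt_diff_mono (col_anti α (Nat.le_succ c)) (by omega)
    -- now show the step for g c
    obtain ⟨y₀, hy₀mem, hy₀⟩ := Finset.exists_mem_eq_sup' (hne x)
      (fun y => cnt (col n α c) y - cnt S y)
    rw [Finset.mem_Icc] at hy₀mem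
    have hgcx : g c x = (cnt (col n α c) y₀ - cnt S y₀) + cnt S x := by
      simp only [hgdef]
      rw [hy₀]
    rcases Nat.lt_or_ge x y₀ with hxy | hxy
    · -- y₀ ≥ x+1
      have hmem' : y₀ ∈ Finset.Icc (x+1) (max (x+1) n) := by
        rw [Finset.mem_Icc]
        exact ⟨by omega, le_trans hy₀mem.2 (max_le_max (by omega) (le_refl n))⟩
      have h1 : cnt (col n α c) y₀ - cnt S y₀ ≤
          (Finset.Icc (x+1) (max (x+1) n)).sup' (hne (x+1))
            (fun y => cnt (col n α c) y - cnt S y) := Finset.le_sup' (fun y => cnt (col n α c) y - cnt S y) hmem'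
      have h2 : g c (x+1) ≥ (cnt (col n α c) y₀ - cnt S y₀) + cnt S (x+1) := by
        have hgx : g c (x+1) = (Finset.Icc (x+1) (max (x+1) n)).sup' (hne (x+1))
            (fun y => cnt (col n α c) y - cnt S y) + cnt S (x+1) := by simp only [hgdef]
        rw [hgx]
        linarith
      rw [hgcx]
      omega
    · -- y₀ = x
      have hy0x : y₀ = x := le_antisymm hxy hy₀mem.1
      have hgcx' : g c x = cnt (col n α c) x := by rw [hgcx, hy0x]; ring
      have hmem' : y₂ ∈ Finset.Icc (x+1) (max (x+1) n) := Finset.mem_Icc.mpr hy₂mem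
      have h1 : cnt (col n α c) y₂ - cnt S y₂ ≤
          (Finset.Icc (x+1) (max (x+1) n)).sup' (hne (x+1))
            (fun y => cnt (col n α c) y - cnt S y) := Finset.le_sup' (fun y => cnt (col n α c) y - cnt S y) hmem'
      have h2 : g c (x+1) ≥ (cnt (col n α c) y₂ - cnt S y₂) + cnt S (x+1) := by
        have hgx : g c (x+1) = (Finset.Icc (x+1) (max (x+1) n)).sup' (hne (x+1))
            (fun y => cnt (col n α c) y - cnt S y) + cnt S (x+1) := by simp only [hgdef]
        rw [hgx]
        linarith
      rw [hgcx']
      omega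
  have hchain : ∀ c c' : ℕ, c ≤ c' → B c' ⊆ B c := by
    intro c c' h
    induction c' with
    | zero =>
      have : c = 0 := by omega
      subst this
      exact subset_refl _
    | succ c' ih =>
      rcases Nat.lt_succ_iff_lt_or_eq.mp (Nat.lt_succ_of_le h) with h' | h'
      · exact (hBnest c').trans (ih (by omega))
      · subst h'
        exact subset_refl _
  -- the bound V and emptiness beyond it
  set V : ℕ := Finset.univ.sup α with hVdef
  have hValpha : ∀ i : Fin n, α i ≤ V := fun i => Finset.le_sup (Finset.mem_univ i)
  have hBempty : ∀ c, V < c → B c = ∅ := by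
    intro c hc
    have hcol : col n α c = ∅ := by
      rw [Finset.eq_empty_iff_forall_notMem]
      intro i hi
      rw [mem_col] at hi
      have := hValpha i
      omega
    have h1 := hBcard c (by omega)
    rw [hcol] at h1
    simp at h1
    exact h1
  -- the maximum composition
  set μ : Fin n → ℕ := fun i => ((Finset.Icc 1 V).filter (fun c => i ∈ B c)).card with hμdef
  have hμcol : ∀ c, 1 ≤ c → col n μ c = B c := by
    intro c hc
    ext i
    rw [mem_col]
    constructor
    · -- c ≤ μ i → i ∈ B c
      intro hle
      by_contra hiB
      have hsub : (Finset.Icc 1 V).filter (fun c' => i ∈ B c') ⊆ Finset.Icc 1 (c-1) := by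
        intro c' hc'
        rw [Finset.mem_filter, Finset.mem_Icc] at hc'
        rw [Finset.mem_Icc]
        refine ⟨hc'.1.1, ?_⟩
        by_contra hgt
        exact hiB (hchain c c' (by omega) hc'.2)
      have h1 := Finset.card_le_card hsub
      rw [Nat.card_Icc] at h1
      rw [hμdef] at hle
      dsimp only at hle
      omega
    · -- i ∈ B c → c ≤ μ i
      intro hiB
      have hcV : c ≤ V := by
        by_contra hgt
        rw [hBempty c (by omega)] at hiB
        exact absurd hiB (Finset.notMem_empty i)
      have hsub : Finset.Icc 1 c ⊆ (Finset.Icc 1 V).filter (fun c' => i ∈ B c') := by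
        intro c' hc'
        rw [Finset.mem_Icc] at hc'
        rw [Finset.mem_filter, Finset.mem_Icc]
        exact ⟨⟨hc'.1, le_trans hc'.2 hcV⟩, hchain c' c (by omega) hiB⟩
      have h1 := Finset.card_le_card hsub
      rw [Nat.card_Icc] at h1
      rw [hμdef]
      dsimp only
      omega
  -- assemble
  refine ⟨μ, ?_, ?_, ?_⟩
  · -- bruhatLE μ α
    unfold bruhatLE
    intro c hc
    rw [hμcol c hc]
    exact hBsetle c hc
  · -- support
    rw [suppC_eq_col_one, hμcol 1 (le_refl 1)]
    exact hBsubS 1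
  · -- maximality
    intro γ hγ hγS
    rw [bruhatLE_iff_cbruhat] at hγ ⊢
    intro c hc
    have hγcard := (hγ c hc).1
    have hγcnt := (hγ c hc).2
    have hγsubS : col n γ c ⊆ S := (col_subset_supp γ hc).trans hγS
    constructor
    · rw [hμcol c hc]
      have := hBcard c hc
      omega
    · intro x
      rw [hμcol c hc]
      rcases le_or_gt x n with hx | hx
      · rw [hcntB c hc x hx]
        have hsup : (Finset.Icc x (max x n)).sup' (hne x)
            (fun y => cnt (col n α c) y - cnt S y) ≤ cnt (col n γ c) x - cnt S x := by
          apply Finset.sup'_le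
          intro y hy
          rw [Finset.mem_Icc] at hy
          have h1 : cnt (col n α c) y ≤ cnt (col n γ c) y := hγcnt y
          have h2 : cnt (col n γ c) y - cnt (col n γ c) x ≤ cnt S y - cnt S x :=
            cnt_diff_mono hγsubS hy.1
          linarith
        have hgx : g c x = (Finset.Icc x (max x n)).sup' (hne x)
            (fun y => cnt (col n α c) y - cnt S y) + cnt S x := by simp only [hgdef]
        rw [hgx]
        linarith
      · rw [cnt_of_le_n _ (by omega), cnt_of_le_n _ (by omega)]
        have h1 := hBcard c hc
        omega

end S11

/-- if `S ≤ supp α` then `M(α, S)` exists and `M(α, S) ⪯ α` in the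
left swap order. -/
theorem stmt11 (n : ℕ) (α : Fin n → ℕ) (S : Finset (Fin n))
    (hS : setLEF n S (suppC n α)) :
    (∃ μ : Fin n → ℕ, isBruhatMax n α S μ) ∧
    (∀ μ : Fin n → ℕ, isBruhatMax n α S μ → leftSwapLE n μ α) := by
  constructor
  · exact S11.exists_bruhat_max α S hS
  · intro μ hμ
    exact S11.cbruhat_to_leftSwapLE (S11.Wsum α) α μ (le_refl _)
      ((S11.bruhatLE_iff_cbruhat μ α).mp hμ.1)
end

section
/- Let C₁, C₂ be two strictly decreasing sequences (viewed as sets of positive integers) representing adjacent columns of a reverse semistandard Young tableau, with |C₁| ≥ |C₂|, and define C₁ ◁ C₂ = {b₁ < b₂ < ... < b_m} where C₂ = {a₁ < ... < a_m}, b₁ is the smallest element of C₁ with b₁ ≥ a₁, and inductively b_k is the smallest element of C₁ with b_k ≥ a_k and b_k > b_{k-1}. Then C₁ ◁ C₂ is well-defined (each b_k exists) and C₁ ◁ C₂ ≥ C₂ (i.e., b_k ≥ a_k for all k). -/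
lemma jthSmallestN_mem (S : Finset ℕ) (j : ℕ) (h : j < S.card) : jthSmallestN S j ∈ S := by
  have hl : j < (Finset.sort S (· ≤ ·)).length := by rwa [Finset.length_sort]
  rw [jthSmallestN, List.getD_eq_getElem _ _ hl]
  exact (Finset.mem_sort _).mp (List.getElem_mem hl)

lemma jthSmallestN_lt (S : Finset ℕ) {i j : ℕ} (hij : i < j) (h : j < S.card) :
    jthSmallestN S i < jthSmallestN S j := by
  have hl : j < (Finset.sort S (· ≤ ·)).length := by rwa [Finset.length_sort]
  have hi : i < (Finset.sort S (· ≤ ·)).length := lt_trans hij hl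
  rw [jthSmallestN, jthSmallestN, List.getD_eq_getElem _ _ hl, List.getD_eq_getElem _ _ hi]
  exact List.pairwise_iff_getElem.mp (Finset.sortedLT_sort S).pairwise i j hi hl hij

lemma jthLargestN_eq (S : Finset ℕ) {j : ℕ} (h : j < S.card) :
    jthLargestN S j = jthSmallestN S (S.card - 1 - j) := by
  have hl : j < (Finset.sort S (· ≤ ·)).reverse.length := by
    rwa [List.length_reverse, Finset.length_sort]
  have hl2 : S.card - 1 - j < (Finset.sort S (· ≤ ·)).length := by
    rw [Finset.length_sort]; omega
  rw [jthLargestN, jthSmallestN, List.getD_eq_getElem _ _ hl, List.getD_eq_getElem _ _ hl2,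
    List.getElem_reverse]
  congr 1
  rw [Finset.length_sort]

def greedy (C : Finset ℕ) (a : ℕ → ℕ) (k : ℕ) : ℕ :=
  ((C.filter (fun c => a k ≤ c ∧ ∀ j : Fin k, greedy C a j < c)).min).getD 0
termination_by k
decreasing_by all_goals exact Fin.is_lt _

def gset (C : Finset ℕ) (a : ℕ → ℕ) (k : ℕ) : Finset ℕ :=
  C.filter (fun c => a k ≤ c ∧ ∀ j : Fin k, greedy C a j < c)

lemma greedy_eq (C : Finset ℕ) (a : ℕ → ℕ) (k : ℕ) :
    greedy C a k = ((gset C a k).min).getD 0 := by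
  conv_lhs => rw [greedy]
  rw [gset]

lemma greedy_eq_min' (C : Finset ℕ) (a : ℕ → ℕ) (k : ℕ) (h : (gset C a k).Nonempty) :
    greedy C a k = (gset C a k).min' h := by
  rw [greedy_eq, ← Finset.coe_min' h]
  rfl

lemma greedy_spec (C₁ C₂ : Finset ℕ) (hcard : C₂.card ≤ C₁.card)
    (hdom : ∀ k < C₂.card, jthLargestN C₂ k ≤ jthLargestN C₁ k) :
    ∀ k, k < C₂.card →
      greedy C₁ (jthSmallestN C₂) k ∈ gset C₁ (jthSmallestN C₂) k
      ∧ greedy C₁ (jthSmallestN C₂) k ≤ jthSmallestN C₁ (C₁.card - C₂.card + k) := by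
  intro k
  induction k using Nat.strong_induction_on with
  | _ k ih =>
    intro hk
    set a := jthSmallestN C₂ with ha
    have hkey : a k ≤ jthSmallestN C₁ (C₁.card - C₂.card + k) := by
      have h1 := hdom (C₂.card - 1 - k) (by omega)
      rw [jthLargestN_eq C₂ (by omega), jthLargestN_eq C₁ (by omega)] at h1
      have e1 : C₂.card - 1 - (C₂.card - 1 - k) = k := by omega
      have e2 : C₁.card - 1 - (C₂.card - 1 - k) = C₁.card - C₂.card + k := by omega
      rw [e1, e2] at h1
      exact h1
    set c₀ := jthSmallestN C₁ (C₁.card - C₂.card + k) with hc₀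
    have hc₀f : c₀ ∈ gset C₁ a k := by
      rw [gset, Finset.mem_filter]
      refine ⟨jthSmallestN_mem _ _ (by omega), hkey, fun j => ?_⟩
      have hj := (ih j j.isLt (lt_trans j.isLt hk)).2
      calc greedy C₁ a j ≤ jthSmallestN C₁ (C₁.card - C₂.card + j) := hj
        _ < c₀ := jthSmallestN_lt C₁ (by omega) (by omega)
    have hne : (gset C₁ a k).Nonempty := ⟨c₀, hc₀f⟩
    rw [greedy_eq_min' C₁ a k hne]
    exact ⟨Finset.min'_mem _ hne, Finset.min'_le _ _ hc₀f⟩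

/-- for adjacent columns `C₁, C₂` of an RSSYT (row-wise domination,
`|C₁| ≥ |C₂|`), the operation `C₁ ◁ C₂` is well-defined: the greedy strictly increasing
choice `b` of elements of `C₁` with `b k ≥ a k` exists, and `C₁ ◁ C₂ ≥ C₂`. -/
theorem stmt12 (C₁ C₂ : Finset ℕ)
    (hpos₁ : ∀ x ∈ C₁, 0 < x) (hpos₂ : ∀ x ∈ C₂, 0 < x)
    (hcard : C₂.card ≤ C₁.card)
    (hdom : ∀ k < C₂.card, jthLargestN C₂ k ≤ jthLargestN C₁ k) :
    ∃ b : Fin C₂.card → ℕ, StrictMono b ∧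
      (∀ k, b k ∈ C₁) ∧
      (∀ k : Fin C₂.card, jthSmallestN C₂ (k : ℕ) ≤ b k) ∧
      (∀ k : Fin C₂.card, ∀ c ∈ C₁, jthSmallestN C₂ (k : ℕ) ≤ c →
        (∀ j : Fin C₂.card, j < k → b j < c) → b k ≤ c) := by
  set a := jthSmallestN C₂ with ha
  refine ⟨fun k => greedy C₁ a k, ?_, ?_, ?_, ?_⟩
  · intro j k hjk
    have hmem := (greedy_spec C₁ C₂ hcard hdom k k.isLt).1
    rw [gset, Finset.mem_filter] at hmem
    exact hmem.2.2 ⟨j, hjk⟩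
  · intro k
    have hmem := (greedy_spec C₁ C₂ hcard hdom k k.isLt).1
    rw [gset, Finset.mem_filter] at hmem
    exact hmem.1
  · intro k
    have hmem := (greedy_spec C₁ C₂ hcard hdom k k.isLt).1
    rw [gset, Finset.mem_filter] at hmem
    exact hmem.2.1
  · intro k c hc hac hlt
    have hne : (gset C₁ a k).Nonempty :=
      ⟨_, (greedy_spec C₁ C₂ hcard hdom k k.isLt).1⟩
    have hcf : c ∈ gset C₁ a (k : ℕ) := by
      rw [gset, Finset.mem_filter]
      exact ⟨hc, hac, fun j => hlt ⟨j, lt_trans j.isLt k.isLt⟩ j.isLt⟩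
    show greedy C₁ a ↑k ≤ c
    rw [greedy_eq_min' C₁ a k hne]
    exact Finset.min'_le _ _ hcf
end

section
/- Let α be a weak composition of length n, S ⊆ [n], and suppose m(α,S) exists (computed by the greedy algorithm: iterate i = 1 to n, adding α_i to a multiset when α_i > 0, and when i ∈ S and the multiset is nonempty, removing its maximum and assigning it to position i of the output σ). Then for each column c, the set of entries in column c of key(σ) equals S ◁ A_c, where A_c is the set of entries in column c of key(α). -/
set_option maxHeartbeats 1000000

-- ===== auxiliary development =====

lemma map_coe_eq {n : ℕ} (l : List (Fin n)) :
    (l.map (fun i => (i : ℕ) + 1)) = l.map (fun i : Fin n => (i : ℕ) + 1) := by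
  induction l with
  | nil => rfl
  | cons a l ih =>
    show List.map _ (List.cons _ _ ++ _) = _
    rw [List.cons_append, List.nil_append, List.map_cons, List.map_cons]
    congr 1

lemma jthSmallestF_def (n : ℕ) (A : Finset (Fin n)) (k : ℕ) :
    jthSmallestF n A k
      = ((Finset.sort A (· ≤ ·)).map (fun i : Fin n => (i : ℕ) + 1)).getD k 0 := by
  unfold jthSmallestF
  rw [map_coe_eq]

lemma jthLargestF_def (n : ℕ) (A : Finset (Fin n)) (j : ℕ) :
    jthLargestF n A j
      = (((Finset.sort A (· ≤ ·)).reverse).map (fun i : Fin n => (i : ℕ) + 1)).getD j 0 := by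
  unfold jthLargestF
  rw [map_coe_eq]

section Aux

variable {n : ℕ}

lemma jthSmallestF_eq_getElem (A : Finset (Fin n)) (k : ℕ)
    (h : k < (Finset.sort A (· ≤ ·)).length) :
    jthSmallestF n A k = ((Finset.sort A (· ≤ ·))[k] : ℕ) + 1 := by
  rw [jthSmallestF_def]
  rw [List.getD_eq_getElem _ _ (by rw [List.length_map]; exact h)]
  rw [List.getElem_map]

lemma jthLargestF_eq_s13 (A : Finset (Fin n)) (j : ℕ) (h : j < A.card) :
    jthLargestF n A j = jthSmallestF n A (A.card - 1 - j) := by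
  have hlen : (Finset.sort A (· ≤ ·)).length = A.card := Finset.length_sort _
  rw [jthSmallestF_eq_getElem A _ (by omega)]
  rw [jthLargestF_def]
  rw [List.getD_eq_getElem _ _ (by rw [List.length_map, List.length_reverse, hlen]; omega)]
  rw [List.getElem_map, List.getElem_reverse]
  simp only [hlen]

lemma sort_getElem_mem (A : Finset (Fin n)) (k : ℕ)
    (h : k < (Finset.sort A (· ≤ ·)).length) :
    (Finset.sort A (· ≤ ·))[k] ∈ A :=
  (Finset.mem_sort _).mp (List.getElem_mem _)

lemma jthSmallestF_strictMono (A : Finset (Fin n)) {j k : ℕ} (hjk : j < k)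
    (hk : k < A.card) :
    jthSmallestF n A j < jthSmallestF n A k := by
  have hlen : (Finset.sort A (· ≤ ·)).length = A.card := Finset.length_sort _
  rw [jthSmallestF_eq_getElem A j (by omega), jthSmallestF_eq_getElem A k (by omega)]
  have := Finset.sortedLT_sort A
    (show (⟨j, by omega⟩ : Fin (Finset.sort A (· ≤ ·)).length) < ⟨k, by omega⟩ by simp [Fin.lt_def]; omega)
  simp only [List.get_eq_getElem] at this
  have : ((Finset.sort A (· ≤ ·))[j] : ℕ) < ((Finset.sort A (· ≤ ·))[k] : ℕ) := this
  omega

lemma jthSmallestF_mono (A : Finset (Fin n)) {j k : ℕ} (hjk : j ≤ k)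
    (hk : k < A.card) :
    jthSmallestF n A j ≤ jthSmallestF n A k := by
  rcases Nat.lt_or_ge j k with h | h
  · exact (jthSmallestF_strictMono A h hk).le
  · have : j = k := by omega
    subst this; rfl

lemma setLEF_of_smallest {S T : Finset (Fin n)} (hcard : S.card = T.card)
    (h : ∀ k < S.card, jthSmallestF n S k ≤ jthSmallestF n T k) : setLEF n S T := by
  refine ⟨hcard, fun j hj => ?_⟩
  rw [jthLargestF_eq_s13 S j hj, jthLargestF_eq_s13 T j (by omega), ← hcard]
  exact h _ (by omega)

lemma smallest_of_setLEF {S T : Finset (Fin n)} (h : setLEF n S T) :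
    ∀ k < S.card, jthSmallestF n S k ≤ jthSmallestF n T k := by
  intro k hk
  obtain ⟨hcard, hL⟩ := h
  have h1 := hL (S.card - 1 - k) (by omega)
  rw [jthLargestF_eq_s13 S _ (by omega), jthLargestF_eq_s13 T _ (by omega), ← hcard] at h1
  have hkk : S.card - 1 - (S.card - 1 - k) = k := by omega
  rwa [hkk] at h1

lemma setLEF_antisymm {S T : Finset (Fin n)} (h1 : setLEF n S T) (h2 : setLEF n T S) :
    S = T := by
  have hcard : S.card = T.card := h1.1
  have hsm : ∀ k < S.card, jthSmallestF n S k = jthSmallestF n T k := by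
    intro k hk
    exact le_antisymm (smallest_of_setLEF h1 k hk)
      (smallest_of_setLEF h2 k (by omega))
  have hlenS : (Finset.sort S (· ≤ ·)).length = S.card := Finset.length_sort _
  have hlenT : (Finset.sort T (· ≤ ·)).length = T.card := Finset.length_sort _
  have hlists : Finset.sort S (· ≤ ·) = Finset.sort T (· ≤ ·) := by
    apply List.ext_getElem (by omega)
    intro k hk hk'
    have := hsm k (by omega)
    rw [jthSmallestF_eq_getElem S k hk, jthSmallestF_eq_getElem T k hk'] at this
    exact Fin.ext (by omega)
  have := congrArg List.toFinset hlists
  rwa [Finset.sort_toFinset, Finset.sort_toFinset] at this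

end Aux

-- ===== greedy via lists =====

def gbL (n : ℕ) (S A : Finset (Fin n)) : ℕ → List (WithTop (Fin n))
  | 0 => []
  | k+1 => gbL n S A k ++ [(S.filter (fun x : Fin n => jthSmallestF n A k ≤ (x : ℕ) + 1 ∧
      ∀ y ∈ gbL n S A k, y < (x : WithTop (Fin n)))).min]

def gbF (n : ℕ) (S A : Finset (Fin n)) (k : ℕ) : WithTop (Fin n) :=
  (gbL n S A (k+1)).getD k ⊤

lemma gbL_length (n : ℕ) (S A : Finset (Fin n)) (k : ℕ) : (gbL n S A k).length = k := by
  induction k with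
  | zero => simp [gbL]
  | succ k ih => simp [gbL, ih]

lemma gbL_getD (n : ℕ) (S A : Finset (Fin n)) {j k : ℕ} (h : j < k) :
    (gbL n S A k).getD j ⊤ = gbF n S A j := by
  induction k with
  | zero => omega
  | succ k ih =>
    rcases Nat.lt_or_ge j k with h' | h'
    · rw [← ih h']
      rw [gbL]
      rw [List.getD_eq_getElem _ _ (by simp [gbL_length]; omega),
        List.getD_eq_getElem _ _ (by simp [gbL_length]; omega)]
      rw [List.getElem_append_left (by simp [gbL_length]; omega)]
    · have hj : j = k := by omega
      subst hj
      rfl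

lemma gbF_eq (n : ℕ) (S A : Finset (Fin n)) (k : ℕ) :
    gbF n S A k = (S.filter (fun x : Fin n => jthSmallestF n A k ≤ (x : ℕ) + 1 ∧
      ∀ j < k, gbF n S A j < (x : WithTop (Fin n)))).min := by
  have hmem : ∀ (x : Fin n), (∀ y ∈ gbL n S A k, y < (x : WithTop (Fin n))) ↔
      (∀ j < k, gbF n S A j < (x : WithTop (Fin n))) := by
    intro x
    constructor
    · intro h j hj
      rw [← gbL_getD n S A hj]
      apply h
      rw [List.getD_eq_getElem _ _ (by simp [gbL_length]; omega)]
      exact List.getElem_mem _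
    · intro h y hy
      obtain ⟨j, hj, rfl⟩ := List.mem_iff_getElem.mp hy
      rw [gbL_length] at hj
      have := gbL_getD n S A hj
      rw [List.getD_eq_getElem _ _ (by simp [gbL_length]; omega)] at this
      rw [this]
      exact h j hj
  show (gbL n S A (k+1)).getD k ⊤ = _
  rw [gbL]
  rw [List.getD_eq_getElem _ _ (by simp [gbL_length])]
  rw [List.getElem_append_right (by simp [gbL_length])]
  simp only [gbL_length, Nat.sub_self, List.getElem_cons_zero]
  congr 1
  ext x
  simp only [Finset.mem_filter]
  rw [hmem x]

lemma gbF_mem {n : ℕ} {S A : Finset (Fin n)} {k : ℕ} {x : Fin n}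
    (h : gbF n S A k = ↑x) :
    x ∈ S ∧ jthSmallestF n A k ≤ (x : ℕ) + 1 ∧
      ∀ j < k, gbF n S A j < (x : WithTop (Fin n)) := by
  rw [gbF_eq] at h
  have := Finset.mem_of_min h
  simpa using this

lemma gbF_le {n : ℕ} {S A : Finset (Fin n)} {k : ℕ} {x : Fin n}
    (h : gbF n S A k = ↑x) {s : Fin n} (hs : s ∈ S)
    (h1 : jthSmallestF n A k ≤ (s : ℕ) + 1)
    (h2 : ∀ j < k, gbF n S A j < (s : WithTop (Fin n))) :
    x ≤ s := by
  rw [gbF_eq] at h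
  have hmem : s ∈ S.filter (fun x : Fin n => jthSmallestF n A k ≤ (x : ℕ) + 1 ∧
      ∀ j < k, gbF n S A j < (x : WithTop (Fin n))) := Finset.mem_filter.mpr ⟨hs, h1, h2⟩
  have hle := Finset.min_le hmem
  rw [h] at hle
  exact_mod_cast hle

lemma gbF_strictMono {n : ℕ} {S A : Finset (Fin n)} {j k : ℕ} (hjk : j < k)
    {x y : Fin n} (hk : gbF n S A k = ↑x) (hj : gbF n S A j = ↑y) : y < x := by
  have := (gbF_mem hk).2.2 j hjk
  rw [hj] at this
  exact_mod_cast this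

lemma gbF_total {n : ℕ} {S A M : Finset (Fin n)} (hMS : M ⊆ S) (hc : M.card = A.card)
    (hdom : ∀ j < A.card, jthSmallestF n A j ≤ jthSmallestF n M j) :
    ∀ k < A.card, ∃ x : Fin n, gbF n S A k = ↑x ∧ (x : ℕ) + 1 ≤ jthSmallestF n M k := by
  intro k
  induction k using Nat.strong_induction_on with
  | _ k ih =>
    intro hk
    have hlenM : (Finset.sort M (· ≤ ·)).length = M.card := Finset.length_sort _
    have hkM : k < (Finset.sort M (· ≤ ·)).length := by omega
    set m := (Finset.sort M (· ≤ ·))[k] with hm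
    have hmM : m ∈ M := sort_getElem_mem M k hkM
    have hmval : jthSmallestF n M k = (m : ℕ) + 1 := jthSmallestF_eq_getElem M k hkM
    have hcond : ∀ j < k, gbF n S A j < (m : WithTop (Fin n)) := by
      intro j hj
      obtain ⟨y, hy, hyb⟩ := ih j hj (by omega)
      rw [hy, WithTop.coe_lt_coe]
      have hstr : jthSmallestF n M j < jthSmallestF n M k :=
        jthSmallestF_strictMono M hj (by omega)
      rw [Fin.lt_def]
      omega
    have hmfilter : m ∈ S.filter (fun x : Fin n => jthSmallestF n A k ≤ (x : ℕ) + 1 ∧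
        ∀ j < k, gbF n S A j < (x : WithTop (Fin n))) :=
      Finset.mem_filter.mpr ⟨hMS hmM, by rw [← hmval]; exact hdom k hk, hcond⟩
    obtain ⟨b, hb⟩ := Finset.min_of_mem hmfilter
    refine ⟨b, by rw [gbF_eq]; exact hb, ?_⟩
    have hle := Finset.min_le hmfilter
    rw [hb] at hle
    have : b ≤ m := by exact_mod_cast hle
    rw [hmval]
    omega

lemma gbF_subset {n : ℕ} {S A A' : Finset (Fin n)} (hAA : A' ⊆ A)
    (htot : ∀ k < A.card, ∃ x : Fin n, gbF n S A k = ↑x) :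
    ∀ k < A'.card, ∀ x : Fin n, gbF n S A' k = ↑x →
      ∃ j, j < A.card ∧ gbF n S A j = ↑x := by
  classical
  have hlen' : (Finset.sort A' (· ≤ ·)).length = A'.card := Finset.length_sort _
  have hlen : (Finset.sort A (· ≤ ·)).length = A.card := Finset.length_sort _
  have hsub : List.Sublist (Finset.sort A' (· ≤ ·)) (Finset.sort A (· ≤ ·)) := by
    apply List.sublist_of_subperm_of_pairwise _ (Finset.pairwise_sort _ _) (Finset.pairwise_sort _ _)
    apply (Finset.sort_nodup _ _).subperm
    intro x hx
    rw [Finset.mem_sort] at hx ⊢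
    exact hAA hx
  obtain ⟨f, hf⟩ := List.sublist_iff_exists_fin_orderEmbedding_get_eq.mp hsub
  set ι : ℕ → ℕ := fun m => if h : m < A'.card then ((f ⟨m, by omega⟩ : Fin _) : ℕ) else 0
    with hι
  have hι1 : ∀ m, m < A'.card → ι m < A.card := by
    intro m h
    simp only [hι, dif_pos h]
    have := (f ⟨m, by omega⟩).isLt
    omega
  have hι3 : ∀ m, ∀ h : m < A'.card, jthSmallestF n A' m = jthSmallestF n A (ι m) := by
    intro m h
    have hfm := hf ⟨m, by omega⟩
    simp only [List.get_eq_getElem] at hfm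
    rw [jthSmallestF_eq_getElem A' m (by omega), hι]
    simp only [dif_pos h]
    rw [jthSmallestF_eq_getElem A _ (by have := (f ⟨m, by omega⟩).isLt; omega)]
    congr 1
    rw [hfm]
  have hι4 : ∀ m₁ m₂, m₁ < m₂ → ∀ h₂ : m₂ < A'.card, ι m₁ < ι m₂ := by
    intro m₁ m₂ h12 h₂
    have h₁ : m₁ < A'.card := by omega
    simp only [hι, dif_pos h₁, dif_pos h₂]
    have := f.strictMono (a := ⟨m₁, by omega⟩) (b := ⟨m₂, by omega⟩)
      (by simp [Fin.lt_def]; omega)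
    simpa [Fin.lt_def] using this
  have hι2 : ∀ m, m < A'.card → m ≤ ι m := by
    intro m
    induction m with
    | zero => omega
    | succ m ihm =>
      intro h
      have h1 := ihm (by omega)
      have h2 := hι4 m (m+1) (by omega) h
      omega
  have main : ∀ k, k < A'.card → ∀ x : Fin n, gbF n S A' k = ↑x →
      (∃ y : Fin n, gbF n S A (ι k) = ↑y ∧ x ≤ y) ∧
        (∃ j, j < A.card ∧ gbF n S A j = ↑x) := by
    intro k
    induction k using Nat.strong_induction_on with
    | _ k ih =>
      intro hk x hx
      obtain ⟨y, hy⟩ := htot (ι k) (hι1 k hk)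
      have hcond : ∀ j < k, gbF n S A' j < (y : WithTop (Fin n)) := by
        intro j hj
        have hlt := (gbF_mem hx).2.2 j hj
        rcases hz : gbF n S A' j with _ | z
        · rw [hz] at hlt
          exact (not_top_lt (hlt : (⊤ : WithTop (Fin n)) < x)).elim
        · obtain ⟨⟨w, hw, hzw⟩, -⟩ := ih j hj (by omega) z hz
          have hwy : w < y := gbF_strictMono (hι4 j k hj hk) hy hw
          exact WithTop.coe_lt_coe.mpr (lt_of_le_of_lt hzw hwy)
      have hxy : x ≤ y := gbF_le hx (gbF_mem hy).1
        (by rw [hι3 k hk]; exact (gbF_mem hy).2.1) hcond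
      refine ⟨⟨y, hy, hxy⟩, ?_⟩
      have hex : ∃ j, j < A.card ∧ ∃ y' : Fin n, gbF n S A j = ↑y' ∧ x ≤ y' :=
        ⟨ι k, hι1 k hk, y, hy, hxy⟩
      set j₀ := Nat.find hex with hj₀
      obtain ⟨hj₀lt, y₀, hy₀, hxy₀⟩ := Nat.find_spec hex
      have hj₀le : j₀ ≤ ι k := Nat.find_le ⟨hι1 k hk, y, hy, hxy⟩
      have hy₀x : y₀ ≤ x := by
        apply gbF_le hy₀ (gbF_mem hx).1
        · calc jthSmallestF n A j₀ ≤ jthSmallestF n A (ι k) :=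
                jthSmallestF_mono A hj₀le (hι1 k hk)
            _ = jthSmallestF n A' k := (hι3 k hk).symm
            _ ≤ (x : ℕ) + 1 := (gbF_mem hx).2.1
        · intro j hj
          obtain ⟨z, hz⟩ := htot j (by omega)
          have hnQ := Nat.find_min hex hj
          rw [hz, WithTop.coe_lt_coe]
          by_contra hcon
          push_neg at hcon
          exact hnQ ⟨by omega, z, hz, hcon⟩
      have : y₀ = x := le_antisymm hy₀x hxy₀
      subst this
      exact ⟨j₀, hj₀lt, hy₀⟩
  intro k hk x hx
  exact (main k hk x hx).2

lemma sort_image_strictMono {n p : ℕ} (b : Fin p → Fin n) (hb : StrictMono b) :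
    Finset.sort (Finset.image b Finset.univ) (· ≤ ·) = List.ofFn b := by
  refine (fun hp h1 h2 => List.Perm.eq_of_pairwise' (r := (· ≤ ·)) h1 h2 hp) ?_ ?_ ?_
  · apply List.perm_of_nodup_nodup_toFinset_eq (Finset.sort_nodup _ _)
      (List.nodup_ofFn.mpr hb.injective)
    rw [Finset.sort_toFinset]
    ext x
    simp [List.mem_ofFn, Set.mem_range]
  · exact Finset.pairwise_sort _ _
  · exact List.pairwise_ofFn.mpr (fun i j hij => (hb hij).le)

/-- if `μ = m(α, S)` (the Bruhat-minimum of `{γ ≥ α : supp γ ⊆ S}`,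
computed by the greedy algorithm), then for every column `c`, the entries of column `c`
of `key μ` are `S ◁ A_c`, where `A_c` is the set of entries of column `c` of `key α`. -/
theorem stmt13 (n : ℕ) (α : Fin n → ℕ) (S : Finset (Fin n)) (μ : Fin n → ℕ)
    (hμ : isBruhatMin n α S μ) :
    ∀ c : ℕ, 1 ≤ c → isLhd n S (col n α c) (col n μ c) := by
  classical
  obtain ⟨hαμ, hsupp, hmin⟩ := hμ
  have hMS : ∀ c, 1 ≤ c → col n μ c ⊆ S := by
    intro c hc i hi
    apply hsupp
    simp only [suppC, Finset.mem_filter, Finset.mem_univ, true_and]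
    simp only [col, Finset.mem_filter, Finset.mem_univ, true_and] at hi
    omega
  have hcard : ∀ c, 1 ≤ c → (col n α c).card = (col n μ c).card :=
    fun c hc => (hαμ c hc).1
  have hdom : ∀ c, 1 ≤ c → ∀ j < (col n α c).card,
      jthSmallestF n (col n α c) j ≤ jthSmallestF n (col n μ c) j :=
    fun c hc => smallest_of_setLEF (hαμ c hc)
  have htot : ∀ c, 1 ≤ c → ∀ k < (col n α c).card, ∃ x : Fin n,
      gbF n S (col n α c) k = ↑x ∧ (x : ℕ) + 1 ≤ jthSmallestF n (col n μ c) k :=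
    fun c hc => gbF_total (hMS c hc) (hcard c hc).symm (hdom c hc)
  set B : ℕ → Finset (Fin n) := fun c => Finset.univ.filter
    (fun x => ∃ k, k < (col n α c).card ∧ gbF n S (col n α c) k = ↑x) with hB
  have hBmem : ∀ c x, x ∈ B c ↔
      ∃ k, k < (col n α c).card ∧ gbF n S (col n α c) k = ↑x := by
    intro c x
    simp [hB]
  have hBS : ∀ c, B c ⊆ S := by
    intro c x hx
    obtain ⟨k, hk, hgb⟩ := (hBmem c x).mp hx
    exact (gbF_mem hgb).1
  have hAsub : ∀ c, col n α (c+1) ⊆ col n α c := by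
    intro c i hi
    simp only [col, Finset.mem_filter, Finset.mem_univ, true_and] at hi ⊢
    omega
  have hBsub : ∀ c, 1 ≤ c → B (c+1) ⊆ B c := by
    intro c hc x hx
    rw [hBmem] at hx ⊢
    obtain ⟨k, hk, hgb⟩ := hx
    exact gbF_subset (hAsub c) (fun k hk => (htot c hc k hk).imp (fun x h => h.1)) k hk x hgb
  have hBchain : ∀ c c', 1 ≤ c → c ≤ c' → B c' ⊆ B c := by
    intro c c' hc hcc
    induction c', hcc using Nat.le_induction with
    | base => exact Finset.Subset.refl _
    | succ c' hcc ih => exact (hBsub c' (by omega)).trans ih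
  have hkey : ∀ c, 1 ≤ c → (B c).card = (col n α c).card ∧
      (∀ k < (col n α c).card, jthSmallestF n (col n α c) k ≤ jthSmallestF n (B c) k) ∧
      (∀ k < (col n α c).card, jthSmallestF n (B c) k ≤ jthSmallestF n (col n μ c) k) ∧
      isLhd n S (col n α c) (B c) := by
    intro c hc
    obtain ⟨bF, hbF⟩ : ∃ bF : Fin (col n α c).card → Fin n, ∀ k : Fin (col n α c).card,
        gbF n S (col n α c) (k : ℕ) = ↑(bF k) ∧
          ((bF k : ℕ) + 1 ≤ jthSmallestF n (col n μ c) (k : ℕ)) := by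
      choose b hb1 hb2 using htot c hc
      exact ⟨fun k => b k k.2, fun k => ⟨hb1 k k.2, hb2 k k.2⟩⟩
    have hb1 : ∀ k : Fin (col n α c).card, gbF n S (col n α c) (k : ℕ) = ↑(bF k) :=
      fun k => (hbF k).1
    have hb2 : ∀ k : Fin (col n α c).card,
        (bF k : ℕ) + 1 ≤ jthSmallestF n (col n μ c) (k : ℕ) := fun k => (hbF k).2
    have hbmono : StrictMono bF := by
      intro j k hjk
      exact gbF_strictMono (show (j : ℕ) < (k : ℕ) from hjk) (hb1 k) (hb1 j)
    have hBim : B c = Finset.image bF Finset.univ := by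
      ext x
      rw [hBmem]
      simp only [Finset.mem_image, Finset.mem_univ, true_and]
      constructor
      · rintro ⟨k, hk, hgb⟩
        refine ⟨⟨k, hk⟩, ?_⟩
        have h2 := hb1 ⟨k, hk⟩
        rw [hgb] at h2
        exact (WithTop.coe_inj.mp h2).symm
      · rintro ⟨k, rfl⟩
        exact ⟨k, k.2, hb1 k⟩
    have hsort : Finset.sort (B c) (· ≤ ·) = List.ofFn bF := by
      rw [hBim]
      exact sort_image_strictMono bF hbmono
    have hcardB : (B c).card = (col n α c).card := by
      rw [hBim, Finset.card_image_of_injective _ hbmono.injective, Finset.card_univ,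
        Fintype.card_fin]
    have hsm : ∀ k, ∀ hk : k < (col n α c).card,
        jthSmallestF n (B c) k = (bF ⟨k, hk⟩ : ℕ) + 1 := by
      intro k hk
      rw [jthSmallestF_eq_getElem (B c) k (by rw [hsort, List.length_ofFn]; exact hk)]
      congr 2
      have heq : (Finset.sort (B c) (· ≤ ·))[k]'(by rw [hsort, List.length_ofFn]; exact hk)
          = (List.ofFn bF)[k]'(by rw [List.length_ofFn]; exact hk) := by
        simp_rw [hsort]
      rw [heq, List.getElem_ofFn]
    refine ⟨hcardB, ?_, ?_, ?_⟩
    · intro k hk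
      rw [hsm k hk]
      exact (gbF_mem (hb1 ⟨k, hk⟩)).2.1
    · intro k hk
      rw [hsm k hk]
      exact hb2 ⟨k, hk⟩
    · refine ⟨bF, hbmono, ?_, ?_, ?_, hBim⟩
      · intro k
        exact (gbF_mem (hb1 k)).1
      · intro k
        exact (gbF_mem (hb1 k)).2.1
      · intro k s hsS h1 h2
        apply gbF_le (hb1 k) hsS h1
        intro j hj
        have hjp : j < (col n α c).card := lt_trans hj k.2
        rw [hb1 ⟨j, hjp⟩]
        exact WithTop.coe_lt_coe.mpr (h2 ⟨j, hjp⟩ (by simpa [Fin.lt_def] using hj))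
  set N : ℕ := (Finset.univ.sup α) + 1 with hN
  have hAN : ∀ c, N ≤ c → col n α c = ∅ := by
    intro c hcN
    apply Finset.eq_empty_of_forall_notMem
    intro i hi
    simp only [col, Finset.mem_filter, Finset.mem_univ, true_and] at hi
    have := Finset.le_sup (f := α) (Finset.mem_univ i)
    omega
  set ν : Fin n → ℕ := fun i => ((Finset.range N).filter (fun c => i ∈ B (c+1))).card
    with hν
  have hνcol : ∀ c, 1 ≤ c → col n ν c = B c := by
    intro c hc
    ext i
    simp only [col, Finset.mem_filter, Finset.mem_univ, true_and]
    constructor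
    · intro hci
      have hex : ∃ d, d ∈ (Finset.range N).filter (fun d => i ∈ B (d+1)) ∧ c ≤ d + 1 := by
        by_contra hcon
        push_neg at hcon
        have hsub2 : (Finset.range N).filter (fun d => i ∈ B (d+1)) ⊆ Finset.range (c-1) := by
          intro d hd
          have := hcon d hd
          simp only [Finset.mem_range]
          omega
        have := Finset.card_le_card hsub2
        simp only [Finset.card_range] at this
        simp only [hν] at hci
        omega
      obtain ⟨d, hd, hcd⟩ := hex
      have hdB : i ∈ B (d+1) := (Finset.mem_filter.mp hd).2
      exact hBchain c (d+1) hc hcd hdB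
    · intro hiB
      have hcN : c < N := by
        obtain ⟨k, hk, -⟩ := (hBmem c i).mp hiB
        by_contra hcon
        push_neg at hcon
        rw [hAN c hcon] at hk
        simp at hk
      have hsub2 : Finset.range c ⊆ (Finset.range N).filter (fun d => i ∈ B (d+1)) := by
        intro d hd
        simp only [Finset.mem_range] at hd
        refine Finset.mem_filter.mpr ⟨Finset.mem_range.mpr (by omega), ?_⟩
        exact hBchain (d+1) c (by omega) (by omega) hiB
      have := Finset.card_le_card hsub2
      simp only [Finset.card_range] at this
      simp only [hν]
      omega
  have hνle : bruhatLE n α ν := by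
    intro c hc
    rw [show col n ν c = B c from hνcol c hc]
    exact setLEF_of_smallest (hkey c hc).1.symm (hkey c hc).2.1
  have hνsupp : suppC n ν ⊆ S := by
    intro i hi
    simp only [suppC, Finset.mem_filter, Finset.mem_univ, true_and] at hi
    have hne : ((Finset.range N).filter (fun d => i ∈ B (d+1))).Nonempty := by
      rw [← Finset.card_pos]
      simpa [hν] using hi
    obtain ⟨d, hd⟩ := hne
    exact hBS (d+1) (Finset.mem_filter.mp hd).2
  have hμν := hmin ν hνle hνsupp
  have hBμ : ∀ c, 1 ≤ c → col n μ c = B c := by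
    intro c hc
    apply setLEF_antisymm
    · have := hμν c hc
      rwa [hνcol c hc] at this
    · refine setLEF_of_smallest ((hkey c hc).1.trans (hcard c hc)) ?_
      intro k hk
      exact (hkey c hc).2.2.1 k (by rw [← (hkey c hc).1]; exact hk)
  intro c hc
  rw [hBμ c hc]
  exact (hkey c hc).2.2.2
end

section
/- Let T be a reverse set-valued tableau written as the pair (L₁, E₁, t) where L₁ is the set of leading entries in column 1, E₁ the set of extra entries in column 1, and t the tableau formed by the remaining columns. If K₋(t) = key(γ) for a weak composition γ, then wt(K₋(T)) = 𝟙_{L₁} + m(γ, L₁). -/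
namespace S15

variable {n : ℕ}

/-- `k`-th smallest value (as a natural number) of a finset of `Fin n`. -/
def eltN (S : Finset (Fin n)) (k : ℕ) : ℕ := ((S.sort (· ≤ ·)).map Fin.val).getD k 0

lemma eltN_eq (S : Finset (Fin n)) {k : ℕ} (h : k < S.card) :
    eltN S k = ((S.orderEmbOfFin rfl ⟨k, h⟩ : Fin n) : ℕ) := by
  have hl : k < ((S.sort (· ≤ ·)).map Fin.val).length := by
    simp [Finset.length_sort, h]
  rw [eltN, List.getD_eq_getElem _ _ hl, List.getElem_map, Finset.orderEmbOfFin_apply]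
  rfl

lemma eltN_mem (S : Finset (Fin n)) {k : ℕ} (h : k < S.card) :
    ∃ i ∈ S, (i : ℕ) = eltN S k :=
  ⟨S.orderEmbOfFin rfl ⟨k, h⟩, Finset.orderEmbOfFin_mem _ _ _, (eltN_eq S h).symm⟩

lemma eltN_lt (S : Finset (Fin n)) {k : ℕ} (h : k < S.card) : eltN S k < n := by
  obtain ⟨i, _, hi⟩ := eltN_mem S h
  exact hi ▸ i.2

lemma eltN_strictMono (S : Finset (Fin n)) {j k : ℕ} (hjk : j < k) (h : k < S.card) :
    eltN S j < eltN S k := by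
  rw [eltN_eq S (lt_trans hjk h), eltN_eq S h]
  exact_mod_cast (S.orderEmbOfFin rfl).strictMono (show (⟨j, lt_trans hjk h⟩ : Fin S.card) < ⟨k, h⟩ from hjk)

lemma eltN_mono (S : Finset (Fin n)) {j k : ℕ} (hjk : j ≤ k) (h : k < S.card) :
    eltN S j ≤ eltN S k := by
  rcases eq_or_lt_of_le hjk with rfl | h'
  · exact le_rfl
  · exact le_of_lt (eltN_strictMono S h' h)

lemma eltN_surj (S : Finset (Fin n)) {i : Fin n} (hi : i ∈ S) :
    ∃ k, ∃ h : k < S.card, eltN S k = (i : ℕ) := by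
  have : i ∈ Set.range (S.orderEmbOfFin rfl) := by
    rw [Finset.range_orderEmbOfFin]; exact hi
  obtain ⟨k, hk⟩ := this
  exact ⟨k, k.2, by rw [eltN_eq S k.2]; exact_mod_cast congrArg Fin.val hk⟩

/-- uniqueness of the increasing enumeration -/
lemma eltN_unique {S : Finset (Fin n)} {m : ℕ} (hm : S.card = m) {f : Fin m → Fin n}
    (hfs : ∀ x, f x ∈ S) (hmono : StrictMono f) {k : ℕ} (hk : k < m) :
    eltN S k = (f ⟨k, hk⟩ : ℕ) := by
  rw [Finset.orderEmbOfFin_unique hm hfs hmono]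
  rw [eltN_eq S (show k < S.card from hm ▸ hk)]
  congr 1

lemma flatMap_pure (l : List (Fin n)) : (l >>= fun a => pure ((a : ℕ))) = l.map Fin.val := by
  induction l <;> simp_all

lemma jthSmallestF_unfold (S : Finset (Fin n)) (k : ℕ) :
    jthSmallestF n S k = (((S.sort (· ≤ ·)).map Fin.val).map (fun x => x + 1)).getD k 0 := by
  rw [jthSmallestF, flatMap_pure]

lemma jthLargestF_unfold (S : Finset (Fin n)) (j : ℕ) :
    jthLargestF n S j = ((((S.sort (· ≤ ·)).map Fin.val).reverse).map (fun x => x + 1)).getD j 0 := by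
  rw [jthLargestF, flatMap_pure, List.map_reverse]

lemma jthSmallestF_eq (S : Finset (Fin n)) {k : ℕ} (h : k < S.card) :
    jthSmallestF n S k = eltN S k + 1 := by
  rw [jthSmallestF_unfold, eltN, List.getD_eq_getElem _ _ (by simpa using h),
    List.getD_eq_getElem _ _ (by simpa using h), List.getElem_map]

lemma jthLargestF_eq (S : Finset (Fin n)) {j : ℕ} (h : j < S.card) :
    jthLargestF n S j = eltN S (S.card - 1 - j) + 1 := by
  rw [jthLargestF_unfold, eltN, List.getD_eq_getElem _ _ (by simpa using h),
    List.getD_eq_getElem _ _ (by simp; omega), List.getElem_map, List.getElem_reverse]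
  congr 2
  simp


lemma filter_card_lt (S : Finset (Fin n)) {k : ℕ} (h : k < S.card) :
    (S.filter (fun (y : Fin n) => eltN S k < y.val)).card = S.card - 1 - k := by
  have hIco : (Finset.Ico (k+1) S.card).card = S.card - 1 - k := by
    rw [Nat.card_Ico]; omega
  rw [← hIco]
  symm
  apply Finset.card_bij (fun a ha => S.orderEmbOfFin rfl ⟨a, (Finset.mem_Ico.mp ha).2⟩)
  · intro a ha
    obtain ⟨ha1, ha2⟩ := Finset.mem_Ico.mp ha
    simp only [Finset.mem_filter]
    refine ⟨Finset.orderEmbOfFin_mem _ _ _, ?_⟩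
    rw [← eltN_eq S ha2]
    exact eltN_strictMono S (by omega) ha2
  · intro a ha b hb hab
    have := congrArg Fin.val ((S.orderEmbOfFin rfl).injective hab)
    simpa using this
  · intro y hy
    obtain ⟨hyS, hyk⟩ := Finset.mem_filter.mp hy
    obtain ⟨a, ha, hay⟩ := eltN_surj S hyS
    have hka : k < a := by
      by_contra hc
      exact absurd (hay ▸ eltN_mono S (by omega) h) (by omega)
    exact ⟨a, Finset.mem_Ico.mpr ⟨by omega, ha⟩, by
      apply Fin.val_injective; rw [← eltN_eq S ha]; exact hay⟩

lemma filter_card_le (S : Finset (Fin n)) {k : ℕ} (h : k < S.card) :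
    (S.filter (fun (y : Fin n) => eltN S k ≤ y.val)).card = S.card - k := by
  have hIco : (Finset.Ico k S.card).card = S.card - k := by rw [Nat.card_Ico]
  rw [← hIco]
  symm
  apply Finset.card_bij (fun a ha => S.orderEmbOfFin rfl ⟨a, (Finset.mem_Ico.mp ha).2⟩)
  · intro a ha
    obtain ⟨ha1, ha2⟩ := Finset.mem_Ico.mp ha
    simp only [Finset.mem_filter]
    refine ⟨Finset.orderEmbOfFin_mem _ _ _, ?_⟩
    rw [← eltN_eq S ha2]
    exact eltN_mono S ha1 ha2
  · intro a ha b hb hab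
    have := congrArg Fin.val ((S.orderEmbOfFin rfl).injective hab)
    simpa using this
  · intro y hy
    obtain ⟨hyS, hyk⟩ := Finset.mem_filter.mp hy
    obtain ⟨a, ha, hay⟩ := eltN_surj S hyS
    have hka : k ≤ a := by
      by_contra hc
      have := eltN_strictMono S (show a < k by omega) h
      omega
    exact ⟨a, Finset.mem_Ico.mpr ⟨hka, ha⟩, by
      apply Fin.val_injective; rw [← eltN_eq S ha]; exact hay⟩

lemma le_eltN_of_filter (S : Finset (Fin n)) (x : ℕ) {j : ℕ} (hj : j < S.card)
    (hx : j + 1 ≤ (S.filter (fun (y : Fin n) => x ≤ y.val)).card) :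
    x ≤ eltN S (S.card - 1 - j) := by
  by_contra hlt
  push_neg at hlt
  have hsub : S.filter (fun (y : Fin n) => x ≤ y.val) ⊆
      S.filter (fun (y : Fin n) => eltN S (S.card - 1 - j) < y.val) := by
    intro y hy
    obtain ⟨hyS, hyx⟩ := Finset.mem_filter.mp hy
    exact Finset.mem_filter.mpr ⟨hyS, by omega⟩
  have := Finset.card_le_card hsub
  rw [filter_card_lt S (show S.card - 1 - j < S.card by omega)] at this
  omega

lemma largest_mono_of_subset {A B : Finset (Fin n)} (hAB : A ⊆ B) {j : ℕ} (hj : j < A.card) :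
    eltN A (A.card - 1 - j) ≤ eltN B (B.card - 1 - j) := by
  have hk : A.card - 1 - j < A.card := by omega
  have h1 : (A.filter (fun (y : Fin n) => eltN A (A.card - 1 - j) ≤ y.val)).card = j + 1 := by
    rw [filter_card_le A hk]; omega
  have hsub : A.filter (fun (y : Fin n) => eltN A (A.card - 1 - j) ≤ y.val) ⊆
      B.filter (fun (y : Fin n) => eltN A (A.card - 1 - j) ≤ y.val) :=
    Finset.filter_subset_filter _ hAB
  exact le_eltN_of_filter B _ (lt_of_lt_of_le hj (Finset.card_le_card hAB))
    (h1 ▸ Finset.card_le_card hsub)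


/-! ### The greedy choice function -/

/-- minimum of a finset of naturals, `0` if empty -/
def mnD (S : Finset ℕ) : ℕ := if h : S.Nonempty then S.min' h else 0

lemma mnD_mem {S : Finset ℕ} (h : S.Nonempty) : mnD S ∈ S := by
  rw [mnD, dif_pos h]; exact S.min'_mem h

lemma mnD_le {S : Finset ℕ} {x : ℕ} (hx : x ∈ S) : mnD S ≤ x := by
  rw [mnD, dif_pos ⟨x, hx⟩]; exact S.min'_le x hx

/-- the greedy sequence realizing `C ◁ A` -/
def grN (C A : Finset (Fin n)) : ℕ → ℕ
  | 0 => mnD ((C.image Fin.val).filter (fun c => eltN A 0 ≤ c))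
  | (k+1) => mnD ((C.image Fin.val).filter (fun c => eltN A (k+1) ≤ c ∧ grN C A k < c))

/-- the hypothesis allowing `C ◁ A` to be formed -/
def HypL (C A : Finset (Fin n)) : Prop :=
  A.card ≤ C.card ∧ ∀ j < A.card, eltN A (A.card - 1 - j) ≤ eltN C (C.card - 1 - j)

lemma HypL.subset {C A A' : Finset (Fin n)} (h : HypL C A) (hsub : A' ⊆ A) : HypL C A' := by
  obtain ⟨h1, h2⟩ := h
  have hc : A'.card ≤ A.card := Finset.card_le_card hsub
  refine ⟨le_trans hc h1, fun j hj => ?_⟩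
  calc eltN A' (A'.card - 1 - j) ≤ eltN A (A.card - 1 - j) := largest_mono_of_subset hsub hj
    _ ≤ eltN C (C.card - 1 - j) := h2 j (by omega)

lemma HypL.dom {C A : Finset (Fin n)} (h : HypL C A) :
    ∀ k < A.card, eltN A k ≤ eltN C (C.card - A.card + k) := by
  intro k hk
  have hj : A.card - 1 - k < A.card := by omega
  have := h.2 (A.card - 1 - k) hj
  have e1 : A.card - 1 - (A.card - 1 - k) = k := by omega
  have e2 : C.card - 1 - (A.card - 1 - k) = C.card - A.card + k := by
    have := h.1; omega
  rw [e1, e2] at this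
  exact this

lemma grN_spec {C A : Finset (Fin n)} (h : HypL C A) :
    ∀ k < A.card,
      grN C A k ∈ C.image Fin.val ∧ eltN A k ≤ grN C A k ∧
      grN C A k ≤ eltN C (C.card - A.card + k) ∧
      (∀ c : Fin n, c ∈ C → eltN A k ≤ c.val → (∀ j < k, grN C A j < c.val) →
        grN C A k ≤ c.val) ∧
      (∀ j < k, grN C A j < grN C A k) := by
  intro k
  induction k with
  | zero =>
    intro hk
    have hCk : C.card - A.card + 0 < C.card := by have := h.1; omega
    obtain ⟨i, hiC, hiv⟩ := eltN_mem C hCk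
    have hcand : (i : ℕ) ∈ (C.image Fin.val).filter (fun c => eltN A 0 ≤ c) := by
      refine Finset.mem_filter.mpr ⟨Finset.mem_image_of_mem _ hiC, ?_⟩
      rw [hiv]; exact h.dom 0 hk
    have hne : ((C.image Fin.val).filter (fun c => eltN A 0 ≤ c)).Nonempty := ⟨_, hcand⟩
    have hmem := mnD_mem hne
    rw [show grN C A 0 = mnD ((C.image Fin.val).filter (fun c => eltN A 0 ≤ c)) from rfl]
    obtain ⟨hm1, hm2⟩ := Finset.mem_filter.mp hmem
    refine ⟨hm1, hm2, ?_, ?_, by omega⟩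
    · have := mnD_le hcand; rw [hiv] at this; exact this
    · intro c hc hac _
      exact mnD_le (Finset.mem_filter.mpr ⟨Finset.mem_image_of_mem _ hc, hac⟩)
  | succ k ih =>
    intro hk
    have hk' : k < A.card := by omega
    obtain ⟨ih1, ih2, ih3, ih4, ih5⟩ := ih hk'
    have hCk : C.card - A.card + (k+1) < C.card := by have := h.1; omega
    obtain ⟨i, hiC, hiv⟩ := eltN_mem C hCk
    have hstep : eltN C (C.card - A.card + k) < eltN C (C.card - A.card + (k+1)) :=
      eltN_strictMono C (by omega) hCk
    have hcand : (i : ℕ) ∈ (C.image Fin.val).filter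
        (fun c => eltN A (k+1) ≤ c ∧ grN C A k < c) := by
      refine Finset.mem_filter.mpr ⟨Finset.mem_image_of_mem _ hiC, ?_, ?_⟩
      · rw [hiv]; exact h.dom (k+1) hk
      · rw [hiv]; omega
    have hne : ((C.image Fin.val).filter
        (fun c => eltN A (k+1) ≤ c ∧ grN C A k < c)).Nonempty := ⟨_, hcand⟩
    have hmem := mnD_mem hne
    rw [show grN C A (k+1) = mnD ((C.image Fin.val).filter
      (fun c => eltN A (k+1) ≤ c ∧ grN C A k < c)) from rfl]
    obtain ⟨hm1, hm23⟩ := Finset.mem_filter.mp hmem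
    obtain ⟨hm2, hm3⟩ := hm23
    refine ⟨hm1, hm2, ?_, ?_, ?_⟩
    · have := mnD_le hcand; rw [hiv] at this; exact this
    · intro c hc hac hprev
      exact mnD_le (Finset.mem_filter.mpr
        ⟨Finset.mem_image_of_mem _ hc, hac, hprev k (by omega)⟩)
    · intro j hj
      rcases Nat.lt_succ_iff_lt_or_eq.mp hj with hj' | rfl
      · exact lt_trans (ih5 j hj') hm3
      · exact hm3

/-- the set `C ◁ A` -/
def lhdSet (C A : Finset (Fin n)) : Finset (Fin n) :=
  C.filter (fun x => ∃ k < A.card, grN C A k = x.val)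

lemma lhdSet_subset (C A : Finset (Fin n)) : lhdSet C A ⊆ C := Finset.filter_subset _ _


lemma grN_lt {C A : Finset (Fin n)} (h : HypL C A) {k : ℕ} (hk : k < A.card) :
    grN C A k < n := by
  obtain ⟨i, _, hiv⟩ := Finset.mem_image.mp (grN_spec h k hk).1
  exact hiv ▸ i.2

/-- the greedy enumeration as a `Fin`-valued map -/
def gF {C A : Finset (Fin n)} (h : HypL C A) : Fin A.card → Fin n :=
  fun k => ⟨grN C A k, grN_lt h k.2⟩

lemma gF_strictMono {C A : Finset (Fin n)} (h : HypL C A) : StrictMono (gF h) := by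
  intro k1 k2 hk
  exact (grN_spec h k2 k2.2).2.2.2.2 k1 hk

lemma gF_mem_C {C A : Finset (Fin n)} (h : HypL C A) (k : Fin A.card) : gF h k ∈ C := by
  obtain ⟨i, hiC, hiv⟩ := Finset.mem_image.mp (grN_spec h k k.2).1
  have : gF h k = i := Fin.val_injective (by simpa [gF] using hiv.symm)
  exact this ▸ hiC

lemma lhdSet_eq_image {C A : Finset (Fin n)} (h : HypL C A) :
    lhdSet C A = Finset.image (gF h) Finset.univ := by
  ext x
  simp only [lhdSet, Finset.mem_filter, Finset.mem_image, Finset.mem_univ, true_and]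
  constructor
  · rintro ⟨hxC, k, hk, hgr⟩
    exact ⟨⟨k, hk⟩, Fin.val_injective (by simpa [gF] using hgr)⟩
  · rintro ⟨k, rfl⟩
    exact ⟨gF_mem_C h k, k.1, k.2, rfl⟩

lemma lhdSet_card {C A : Finset (Fin n)} (h : HypL C A) : (lhdSet C A).card = A.card := by
  rw [lhdSet_eq_image h, Finset.card_image_of_injective _ (gF_strictMono h).injective,
    Finset.card_univ, Fintype.card_fin]

lemma lhdSet_eltN {C A : Finset (Fin n)} (h : HypL C A) {k : ℕ} (hk : k < A.card) :
    eltN (lhdSet C A) k = grN C A k := by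
  have hmem : ∀ x, gF h x ∈ lhdSet C A := by
    intro x
    rw [lhdSet_eq_image h]
    exact Finset.mem_image_of_mem _ (Finset.mem_univ x)
  exact eltN_unique (lhdSet_card h) hmem (gF_strictMono h) hk

lemma isLhd_lhdSet {C A : Finset (Fin n)} (h : HypL C A) : isLhd n C A (lhdSet C A) := by
  refine ⟨gF h, gF_strictMono h, gF_mem_C h, ?_, ?_, lhdSet_eq_image h⟩
  · intro k
    rw [jthSmallestF_eq A k.2]
    have := (grN_spec h k k.2).2.1
    simp only [gF]
    omega
  · intro k c hc hac hprev
    rw [jthSmallestF_eq A k.2] at hac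
    have hmin := (grN_spec h k k.2).2.2.2.1 c hc (by omega) ?_
    · exact Fin.le_def.mpr (by simpa [gF] using hmin)
    · intro j hj
      have := hprev ⟨j, lt_trans hj k.2⟩ hj
      exact Fin.lt_def.mp this

/-- domination : `A ≤ C ◁ A` in `setLEF` -/
lemma setLEF_lhdSet {C A : Finset (Fin n)} (h : HypL C A) : setLEF n A (lhdSet C A) := by
  refine ⟨(lhdSet_card h).symm, fun j hj => ?_⟩
  have hj' : j < (lhdSet C A).card := by rw [lhdSet_card h]; exact hj
  rw [jthLargestF_eq A hj, jthLargestF_eq _ hj', lhdSet_card h,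
    lhdSet_eltN h (show A.card - 1 - j < A.card by omega)]
  have := (grN_spec h (A.card - 1 - j) (by omega)).2.1
  omega

/-- minimality : `C ◁ A` is `setLEF`-below any `A' ⊆ C` with `A ≤ A'` -/
lemma lhdSet_min {C A A' : Finset (Fin n)} (h : HypL C A) (hA'C : A' ⊆ C)
    (hle : setLEF n A A') : setLEF n (lhdSet C A) A' := by
  obtain ⟨hcards, hdom⟩ := hle
  have hsm : ∀ k < A.card, eltN A k ≤ eltN A' k := by
    intro k hk
    have hj : A.card - 1 - k < A.card := by omega
    have := hdom (A.card - 1 - k) hj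
    rw [jthLargestF_eq A hj, jthLargestF_eq A' (by omega)] at this
    have e1 : A.card - 1 - (A.card - 1 - k) = k := by omega
    have e2 : A'.card - 1 - (A.card - 1 - k) = k := by omega
    rw [e1, e2] at this
    omega
  have key : ∀ k, k < A.card → grN C A k ≤ eltN A' k := by
    intro k
    induction k using Nat.strong_induction_on with
    | _ k ih =>
      intro hk
      have hk' : k < A'.card := by omega
      obtain ⟨i, hiA', hiv⟩ := eltN_mem A' hk'
      have := (grN_spec h k hk).2.2.2.1 i (hA'C hiA') (by rw [hiv]; exact hsm k hk) ?_
      · omega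
      · intro j hj
        have h1 : grN C A j ≤ eltN A' j := ih j hj (by omega)
        have h2 : eltN A' j < eltN A' k := eltN_strictMono A' hj hk'
        omega
  refine ⟨by rw [lhdSet_card h]; exact hcards, fun j hj => ?_⟩
  rw [lhdSet_card h] at hj
  rw [jthLargestF_eq _ (by rw [lhdSet_card h]; exact hj), jthLargestF_eq A' (by omega),
    lhdSet_card h, lhdSet_eltN h (show A.card - 1 - j < A.card by omega)]
  have e2 : A'.card - 1 - j = A.card - 1 - j := by omega
  rw [e2]
  have := key (A.card - 1 - j) (by omega)
  omega


/-! ### Nesting -/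

lemma eltN_erase {A : Finset (Fin n)} {t : Fin n} (ht : t ∈ A) :
    ∃ a, ∃ _ : a < A.card, eltN A a = (t : ℕ) ∧
      (∀ k < A.card - 1, eltN (A.erase t) k = if k < a then eltN A k else eltN A (k+1)) := by
  obtain ⟨a, ha, hav⟩ := eltN_surj A ht
  refine ⟨a, ha, hav, ?_⟩
  have hcard : (A.erase t).card = A.card - 1 := Finset.card_erase_of_mem ht
  set f : Fin (A.card - 1) → Fin n := fun k =>
    A.orderEmbOfFin rfl ⟨if k.val < a then k.val else k.val + 1, by split <;> omega⟩ with hf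
  have hmono : StrictMono f := by
    intro k1 k2 hk
    apply (A.orderEmbOfFin rfl).strictMono
    simp only [Fin.mk_lt_mk]
    split <;> split <;> omega
  have hval : ∀ k : Fin (A.card - 1),
      (f k : ℕ) = if k.val < a then eltN A k.val else eltN A (k.val + 1) := by
    intro k
    by_cases hc : k.val < a
    · rw [if_pos hc, eltN_eq A (show k.val < A.card by omega)]
      simp only [hf]
      apply congrArg Fin.val
      apply congrArg
      exact Fin.ext (if_pos hc)
    · rw [if_neg hc, eltN_eq A (show k.val + 1 < A.card by omega)]
      simp only [hf]
      apply congrArg Fin.val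
      apply congrArg
      exact Fin.ext (if_neg hc)
  have hfs : ∀ k, f k ∈ A.erase t := by
    intro k
    refine Finset.mem_erase.mpr ⟨?_, Finset.orderEmbOfFin_mem _ _ _⟩
    intro hft
    have h1 := hval k
    rw [hft, ← hav] at h1
    by_cases hc : k.val < a
    · rw [if_pos hc] at h1
      exact absurd (h1 ▸ eltN_strictMono A hc ha) (lt_irrefl _)
    · rw [if_neg hc] at h1
      have := eltN_strictMono A (show a < k.val + 1 by omega) (show k.val + 1 < A.card by omega)
      omega
  intro k hk
  rw [eltN_unique hcard hfs hmono hk]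
  exact hval ⟨k, hk⟩

lemma grN_erase {C A : Finset (Fin n)} (h : HypL C A) {t : Fin n} (ht : t ∈ A) :
    ∀ k < A.card - 1, ∃ k', ∃ _ : k' < A.card, grN C (A.erase t) k = grN C A k' := by
  obtain ⟨a, ha, hav, helt⟩ := eltN_erase ht
  have h' : HypL C (A.erase t) := h.subset (Finset.erase_subset _ _)
  have hcard : (A.erase t).card = A.card - 1 := Finset.card_erase_of_mem ht
  set A' := A.erase t with hA'
  -- Phase 1: before the removed index the greedy sequences agree
  have claim1 : ∀ k, k < a → k < A.card - 1 → grN C A' k = grN C A k := by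
    intro k
    induction k with
    | zero =>
      intro hka hkm
      show mnD _ = mnD _
      rw [helt 0 hkm, if_pos hka]
    | succ k ih =>
      intro hka hkm
      show mnD _ = mnD _
      rw [helt (k+1) hkm, if_pos hka, ih (by omega) (by omega)]
  -- Phase 2: after the removed index, sandwiched between consecutive values
  have claim2 : ∀ k, a ≤ k → k < A.card - 1 →
      grN C A k ≤ grN C A' k ∧ grN C A' k ≤ grN C A (k+1) ∧
      (grN C A' k = grN C A k ∨ grN C A' k = grN C A (k+1)) := by
    intro k
    induction k using Nat.strong_induction_on with
    | _ k ih =>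
      intro hak hkm
      have hkA : k < A.card := by omega
      have hk1A : k + 1 < A.card := by omega
      have hkA' : k < A'.card := by omega
      have heq : eltN A' k = eltN A (k+1) := by rw [helt k hkm, if_neg (by omega)]
      have spec := grN_spec h
      have spec' := grN_spec h'
      obtain ⟨i', hi'C, hi'v⟩ := Finset.mem_image.mp (spec' k hkA').1
      obtain ⟨i1, hi1C, hi1v⟩ := Finset.mem_image.mp (spec (k+1) hk1A).1
      have h1 : grN C A k ≤ grN C A' k := by
        have := (spec k hkA).2.2.2.1 i' hi'C ?_ ?_
        · omega
        · have e1 : eltN A k ≤ eltN A (k+1) := eltN_mono A (by omega) hk1A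
          have e2 : eltN A' k ≤ grN C A' k := (spec' k hkA').2.1
          omega
        · intro j hj
          rcases lt_or_ge j a with hja | hja
          · rw [← claim1 j hja (by omega)]
            have := (spec' k hkA').2.2.2.2 j hj
            omega
          · have := (ih j hj (by omega) (by omega)).1
            have h2 := (spec' k hkA').2.2.2.2 j hj
            omega
      have h2 : grN C A' k ≤ grN C A (k+1) := by
        have := (spec' k hkA').2.2.2.1 i1 hi1C ?_ ?_
        · omega
        · have := (spec (k+1) hk1A).2.1
          omega
        · intro j hj
          rcases lt_or_ge j a with hja | hja
          · rw [claim1 j hja (by omega)]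
            have := (spec (k+1) hk1A).2.2.2.2 j (by omega)
            omega
          · have hj1 : grN C A' j ≤ grN C A (j+1) := (ih j hj (by omega) (by omega)).2.1
            have : grN C A (j+1) ≤ grN C A k := by
              rcases Nat.lt_or_ge (j+1) k with hjk | hjk
              · exact le_of_lt ((spec k hkA).2.2.2.2 (j+1) hjk)
              · have : j + 1 = k := by omega
                rw [this]
            have := (spec (k+1) hk1A).2.2.2.2 k (by omega)
            omega
      refine ⟨h1, h2, ?_⟩
      by_contra hc
      push_neg at hc
      obtain ⟨hne1, hne2⟩ := hc
      have hlt1 : grN C A k < grN C A' k := lt_of_le_of_ne h1 (fun e => hne1 e.symm)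
      have hlt2 : grN C A' k < grN C A (k+1) := lt_of_le_of_ne h2 hne2
      have := (spec (k+1) hk1A).2.2.2.1 i' hi'C ?_ ?_
      · omega
      · have : eltN A' k ≤ grN C A' k := (spec' k hkA').2.1
        omega
      · intro j hj
        rcases Nat.lt_or_ge j k with hjk | hjk
        · have := (spec k hkA).2.2.2.2 j hjk
          omega
        · have : j = k := by omega
          subst this
          omega
  intro k hk
  rcases lt_or_ge k a with hka | hka
  · exact ⟨k, by omega, claim1 k hka hk⟩
  · rcases (claim2 k hka hk).2.2 with he | he
    · exact ⟨k, by omega, he⟩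
    · exact ⟨k+1, by omega, he⟩

lemma lhdSet_erase_subset {C A : Finset (Fin n)} (h : HypL C A) {t : Fin n} (ht : t ∈ A) :
    lhdSet C (A.erase t) ⊆ lhdSet C A := by
  intro x hx
  obtain ⟨hxC, k, hk, hgr⟩ := Finset.mem_filter.mp hx
  rw [Finset.card_erase_of_mem ht] at hk
  obtain ⟨k', hk', he⟩ := grN_erase h ht k hk
  exact Finset.mem_filter.mpr ⟨hxC, k', hk', by rw [← he]; exact hgr⟩

lemma lhdSet_mono_aux {C : Finset (Fin n)} :
    ∀ d (A A' : Finset (Fin n)), HypL C A → A' ⊆ A → (A \ A').card = d →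
      lhdSet C A' ⊆ lhdSet C A := by
  intro d
  induction d with
  | zero =>
    intro A A' hH hsub hd
    have : A \ A' = ∅ := Finset.card_eq_zero.mp hd
    have : A = A' := Finset.Subset.antisymm (by
      intro x hx
      by_contra hc
      exact absurd (Finset.mem_sdiff.mpr ⟨hx, hc⟩) (by rw [this]; simp)) hsub
    rw [this]
  | succ d ih =>
    intro A A' hH hsub hd
    have hne : (A \ A').Nonempty := Finset.card_pos.mp (by omega)
    obtain ⟨t, htm⟩ := hne
    obtain ⟨htA, htA'⟩ := Finset.mem_sdiff.mp htm
    have h1 : A' ⊆ A.erase t := Finset.subset_erase.mpr ⟨hsub, htA'⟩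
    have h2 : (A.erase t) \ A' = (A \ A').erase t := by
      ext x
      simp only [Finset.mem_sdiff, Finset.mem_erase]
      tauto
    have h3 : ((A.erase t) \ A').card = d := by
      rw [h2, Finset.card_erase_of_mem htm]; omega
    exact subset_trans (ih (A.erase t) A' (hH.subset (Finset.erase_subset _ _)) h1 h3)
      (lhdSet_erase_subset hH htA)

lemma lhdSet_mono {C A A' : Finset (Fin n)} (h : HypL C A) (hsub : A' ⊆ A) :
    lhdSet C A' ⊆ lhdSet C A :=
  lhdSet_mono_aux _ A A' h hsub rfl


/-! ### Chains -/

lemma isLhd_sub_card {C A B : Finset (Fin n)} (h : isLhd n C A B) :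
    B ⊆ C ∧ B.card = A.card := by
  obtain ⟨b, hmono, hmem, _, _, rfl⟩ := h
  constructor
  · intro x hx
    obtain ⟨k, _, rfl⟩ := Finset.mem_image.mp hx
    exact hmem k
  · rw [Finset.card_image_of_injective _ hmono.injective, Finset.card_univ, Fintype.card_fin]

lemma lhdChain_head_subset {C : Finset (Fin n)} {rest : List (Finset (Fin n))}
    {B : Finset (Fin n)} (h : lhdChain n (C :: rest) B) : B ⊆ C := by
  cases rest with
  | nil => exact h ▸ Finset.Subset.refl _
  | cons D rest' =>
    obtain ⟨B', _, h2⟩ := h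
    exact (isLhd_sub_card h2).1

lemma lhdChain_card : ∀ (l : List (Finset (Fin n))) (B : Finset (Fin n)),
    lhdChain n l B → B.card = (l.getLast?.getD ∅).card := by
  intro l
  induction l with
  | nil => intro B hB; rw [hB]; rfl
  | cons C rest ih =>
    cases rest with
    | nil => intro B hB; rw [show B = C from hB]; rfl
    | cons D rest' =>
      intro B hB
      obtain ⟨B', h1, h2⟩ := hB
      rw [(isLhd_sub_card h2).2, ih B' h1]
      rfl

lemma range_map_decomp (f : ℕ → Finset (Fin n)) (m : ℕ) :
    (List.range (m+1)).map f = f 0 :: (List.range m).map (fun i => f (i+1)) := by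
  rw [List.range_succ_eq_map, List.map_cons, List.map_map]
  rfl

lemma range_map_getLast (f : ℕ → Finset (Fin n)) (m : ℕ) :
    ((List.range (m+1)).map f).getLast?.getD ∅ = f m := by
  rw [List.range_succ, List.map_append]
  simp

end S15

open S15

theorem stmt15 (n : ℕ) (γ : Fin n → ℕ) (L E : ℕ → Finset (Fin n))
    (hT : isValidRSVT n L E)
    (hkey : ∀ c, 1 ≤ c → ∃ B, lhdChain n ((List.range c).map (fun i => L (i+2))) B ∧
      B = col n γ c) :
    ∃ μ : Fin n → ℕ, isBruhatMin n γ (L 1) μ ∧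
      ∀ c, 1 ≤ c → ∃ B, lhdChain n ((List.range c).map (fun i => L (i+1))) B ∧
        B = col n (fun i => (if i ∈ L 1 then 1 else 0) + μ i) c := by
  classical
  obtain ⟨hdisj, hcards, ⟨N, hN⟩, hrows, hextra⟩ := hT
  have hL21 : (L 2).card ≤ (L 1).card := hcards 1 le_rfl
  have hHypL12 : HypL (L 1) (L 2) := by
    refine ⟨hL21, fun j hj => ?_⟩
    have h := hrows 1 le_rfl j hj
    rw [jthLargestF_eq _ hj, jthLargestF_eq _ (lt_of_lt_of_le hj hL21)] at h
    omega
  have hcolsub : ∀ c, 1 ≤ c → col n γ c ⊆ L 2 := by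
    intro c hc
    obtain ⟨B, hch, hB⟩ := hkey c hc
    obtain ⟨m, rfl⟩ : ∃ m, c = m + 1 := ⟨c - 1, by omega⟩
    rw [range_map_decomp] at hch
    exact hB ▸ lhdChain_head_subset hch
  have hHyp : ∀ c, 1 ≤ c → HypL (L 1) (col n γ c) :=
    fun c hc => hHypL12.subset (hcolsub c hc)
  have hcolcard : ∀ c, 1 ≤ c → (col n γ c).card = (L (c+1)).card := by
    intro c hc
    obtain ⟨B, hch, hB⟩ := hkey c hc
    obtain ⟨m, rfl⟩ : ∃ m, c = m + 1 := ⟨c - 1, by omega⟩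
    have h := lhdChain_card _ _ hch
    rw [range_map_getLast] at h
    rw [← hB, h]
  have hcolempty : ∀ c, N ≤ c → 1 ≤ c → col n γ c = ∅ := by
    intro c h1 h2
    have h := hcolcard c h2
    rw [(hN (c+1) (by omega)).1] at h
    simpa using Finset.card_eq_zero.mp (by simpa using h)
  set Bc : ℕ → Finset (Fin n) :=
    fun c => if c ≤ 1 then L 1 else lhdSet (L 1) (col n γ (c-1)) with hBc
  have hBc1 : Bc 1 = L 1 := by simp [hBc]
  have hBcsucc : ∀ c, 1 ≤ c → Bc (c+1) = lhdSet (L 1) (col n γ c) := by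
    intro c hc
    rw [hBc]
    simp only
    rw [if_neg (by omega)]
    congr 1
  have hBsubL1 : ∀ c, Bc c ⊆ L 1 := by
    intro c
    rw [hBc]
    simp only
    split
    · exact Finset.Subset.refl _
    · exact lhdSet_subset _ _
  have hcolmono : ∀ c, 1 ≤ c → col n γ c ⊆ col n γ (c-1) := by
    intro c hc i hi
    rw [col, Finset.mem_filter] at hi ⊢
    exact ⟨hi.1, by omega⟩
  have hnest : ∀ c, 1 ≤ c → Bc (c+1) ⊆ Bc c := by
    intro c hc
    rcases eq_or_lt_of_le hc with h1 | h1
    · rw [hBcsucc c hc, ← h1, hBc1]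
      exact lhdSet_subset _ _
    · rw [hBcsucc c hc, hBc]
      simp only
      rw [if_neg (by omega)]
      have hs : col n γ c ⊆ col n γ (c-1) := hcolmono c hc
      exact lhdSet_mono (hHyp (c-1) (by omega)) hs
  have hdown : ∀ c' c, 1 ≤ c' → c' ≤ c → Bc c ⊆ Bc c' := by
    intro c' c h1 h2
    induction c, h2 using Nat.le_induction with
    | base => exact Finset.Subset.refl _
    | succ c hc ih => exact subset_trans (hnest c (by omega)) ih
  have hBempty : ∀ c, N + 2 ≤ c → Bc c = ∅ := by
    intro c hc
    rw [hBc]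
    simp only
    rw [if_neg (by omega)]
    apply Finset.card_eq_zero.mp
    rw [lhdSet_card (hHyp (c-1) (by omega)), hcolempty (c-1) (by omega) (by omega)]
    rfl
  set δ : Fin n → ℕ :=
    fun i => ((Finset.Icc 1 (N+2)).filter (fun c => i ∈ Bc c)).card with hδ
  have hKD : ∀ c, 1 ≤ c → ∀ i : Fin n, i ∈ Bc c ↔ c ≤ δ i := by
    intro c hc i
    constructor
    · intro hi
      have hcM : c ≤ N + 2 := by
        by_contra hcM
        rw [hBempty c (by omega)] at hi
        exact absurd hi (Finset.notMem_empty i)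
      have hsub : Finset.Icc 1 c ⊆ (Finset.Icc 1 (N+2)).filter (fun c' => i ∈ Bc c') := by
        intro c' hc'
        obtain ⟨h1', h2'⟩ := Finset.mem_Icc.mp hc'
        exact Finset.mem_filter.mpr ⟨Finset.mem_Icc.mpr ⟨h1', by omega⟩,
          hdown c' c h1' h2' hi⟩
      have h := Finset.card_le_card hsub
      rw [Nat.card_Icc] at h
      rw [hδ]
      simp only
      omega
    · intro hcδ
      have hδpos : 1 ≤ δ i := le_trans hc hcδ
      have hne : ((Finset.Icc 1 (N+2)).filter (fun c' => i ∈ Bc c')).Nonempty := by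
        apply Finset.card_pos.mp
        rw [hδ] at hδpos
        simp only at hδpos
        omega
      set cmax := ((Finset.Icc 1 (N+2)).filter (fun c' => i ∈ Bc c')).max' hne with hcmax
      have hmax_mem := Finset.max'_mem _ hne
      rw [← hcmax] at hmax_mem
      obtain ⟨hmaxIcc, hmaxB⟩ := Finset.mem_filter.mp hmax_mem
      obtain ⟨h1max, _⟩ := Finset.mem_Icc.mp hmaxIcc
      have hsub2 : (Finset.Icc 1 (N+2)).filter (fun c' => i ∈ Bc c') ⊆
          Finset.Icc 1 cmax := by
        intro x hx
        obtain ⟨hx1, _⟩ := Finset.mem_Icc.mp (Finset.mem_filter.mp hx).1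
        exact Finset.mem_Icc.mpr ⟨hx1, Finset.le_max' _ _ hx⟩
      have h2 := Finset.card_le_card hsub2
      rw [Nat.card_Icc] at h2
      have hδle : δ i ≤ cmax := by
        rw [hδ]
        simp only
        omega
      exact hdown c cmax hc (by omega) hmaxB
  have hcolδ : ∀ c, 1 ≤ c → col n δ c = Bc c := by
    intro c hc
    ext i
    rw [col, Finset.mem_filter]
    constructor
    · intro ⟨_, h⟩
      exact (hKD c hc i).mpr h
    · intro h
      exact ⟨Finset.mem_univ i, (hKD c hc i).mp h⟩
  set μ : Fin n → ℕ := fun i => if i ∈ L 1 then δ i - 1 else 0 with hμ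
  have hδL1 : ∀ i, i ∈ L 1 ↔ 1 ≤ δ i := by
    intro i
    rw [← hKD 1 le_rfl i, hBc1]
  have hsum : (fun i => (if i ∈ L 1 then 1 else 0) + μ i) = δ := by
    funext i
    by_cases hi : i ∈ L 1
    · have h := (hδL1 i).mp hi
      rw [hμ]
      simp only [hi, if_true]
      omega
    · have h : ¬ 1 ≤ δ i := fun h => hi ((hδL1 i).mpr h)
      rw [hμ]
      simp only [hi, if_false]
      omega
  have hcolμ : ∀ c, 1 ≤ c → col n μ c = Bc (c+1) := by
    intro c hc
    rw [← hcolδ (c+1) (by omega)]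
    ext i
    rw [col, col, Finset.mem_filter, Finset.mem_filter]
    by_cases hi : i ∈ L 1
    · have h := (hδL1 i).mp hi
      rw [hμ]
      simp only [hi, if_true, Finset.mem_univ, true_and]
      omega
    · have h : ¬ 1 ≤ δ i := fun h => hi ((hδL1 i).mpr h)
      rw [hμ]
      simp only [hi, if_false, Finset.mem_univ, true_and]
      omega
  refine ⟨μ, ⟨?_, ?_, ?_⟩, ?_⟩
  · -- bruhatLE γ μ
    intro c hc
    rw [hcolμ c hc, hBcsucc c hc]
    exact setLEF_lhdSet (hHyp c hc)
  · -- support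
    intro i hi
    rw [suppC, Finset.mem_filter] at hi
    by_contra hc
    rw [hμ] at hi
    simp only [hc, if_false] at hi
    omega
  · -- minimality
    intro γ' hb hs c hc
    rw [hcolμ c hc, hBcsucc c hc]
    have hsub : col n γ' c ⊆ L 1 := by
      intro i hi
      rw [col, Finset.mem_filter] at hi
      exact hs (by rw [suppC, Finset.mem_filter]; exact ⟨Finset.mem_univ i, by omega⟩)
    exact lhdSet_min (hHyp c hc) hsub (hb c hc)
  · -- the left key of the full tableau
    intro c hc
    rw [hsum]
    obtain ⟨m, rfl⟩ : ∃ m, c = m + 1 := ⟨c - 1, by omega⟩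
    cases m with
    | zero =>
      refine ⟨L 1, ?_, ?_⟩
      · show lhdChain n [L 1] (L 1)
        rfl
      · rw [hcolδ 1 le_rfl, hBc1]
    | succ m' =>
      obtain ⟨B', hch, hB'⟩ := hkey (m'+1) (by omega)
      refine ⟨lhdSet (L 1) (col n γ (m'+1)), ?_, ?_⟩
      · rw [range_map_decomp (fun i => L (i+1)) (m'+1)]
        have hlist : (List.range (m'+1)).map (fun i => L (i+1+1)) =
            (List.range (m'+1)).map (fun i => L (i+2)) := rfl
        rw [hlist, range_map_decomp (fun i => L (i+2)) m']
        rw [range_map_decomp (fun i => L (i+2)) m'] at hch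
        refine ⟨B', hch, ?_⟩
        rw [hB']
        exact isLhd_lhdSet (hHyp (m'+1) (by omega))
      · rw [hcolδ (m'+2) (by omega)]
        have h := hBcsucc (m'+1) (by omega)
        rw [show m'+1+1 = m'+2 from rfl] at h
        rw [h]
end
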